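/- arXiv:math/9903052 — 5 statements merged into one kernel-verified Lean document; each statement's English description precedes it below -/
import Mathlib

section
/- In 𝒲 = U(𝔤) ⊗ Cl(𝔤), the element 𝔇 is invariant: for every index a, (u_a ⊗ 1 + 1 ⊗ g_a)·𝔇 = 𝔇·(u_a ⊗ 1 + 1 ⊗ g_a). -/
open scoped TensorProduct

private lemma sum4_swap14 {α M : Type*} [Fintype α] [AddCommMonoid M]
    (H : α → α → α → α → M) :
    (∑ b, ∑ c, ∑ d, ∑ r, H b c d r) = ∑ b, ∑ c, ∑ d, ∑ r, H r c d b := by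
  have h1 : (∑ b, ∑ c, ∑ d, ∑ r, H b c d r)
      = ∑ p : α × α × α × α, H p.1 p.2.1 p.2.2.1 p.2.2.2 := by
    simp [Fintype.sum_prod_type]
  have h2 : (∑ b, ∑ c, ∑ d, ∑ r, H r c d b)
      = ∑ p : α × α × α × α, H p.2.2.2 p.2.1 p.2.2.1 p.1 := by
    simp [Fintype.sum_prod_type]
  rw [h1, h2]
  exact Fintype.sum_bijective (fun p => (p.2.2.2, p.2.1, p.2.2.1, p.1))
    (Function.Involutive.bijective fun p => rfl) _ _ (fun p => rfl)

private lemma sum4_swap24 {α M : Type*} [Fintype α] [AddCommMonoid M]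
    (H : α → α → α → α → M) :
    (∑ b, ∑ c, ∑ d, ∑ r, H b c d r) = ∑ b, ∑ c, ∑ d, ∑ r, H b r d c := by
  have h1 : (∑ b, ∑ c, ∑ d, ∑ r, H b c d r)
      = ∑ p : α × α × α × α, H p.1 p.2.1 p.2.2.1 p.2.2.2 := by
    simp [Fintype.sum_prod_type]
  have h2 : (∑ b, ∑ c, ∑ d, ∑ r, H b r d c)
      = ∑ p : α × α × α × α, H p.1 p.2.2.2 p.2.2.1 p.2.1 := by
    simp [Fintype.sum_prod_type]
  rw [h1, h2]
  exact Fintype.sum_bijective (fun p => (p.1, p.2.2.2, p.2.2.1, p.2.1))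
    (Function.Involutive.bijective fun p => rfl) _ _ (fun p => rfl)

private lemma sum4_swap34 {α M : Type*} [Fintype α] [AddCommMonoid M]
    (H : α → α → α → α → M) :
    (∑ b, ∑ c, ∑ d, ∑ r, H b c d r) = ∑ b, ∑ c, ∑ d, ∑ r, H b c r d := by
  have h1 : (∑ b, ∑ c, ∑ d, ∑ r, H b c d r)
      = ∑ p : α × α × α × α, H p.1 p.2.1 p.2.2.1 p.2.2.2 := by
    simp [Fintype.sum_prod_type]
  have h2 : (∑ b, ∑ c, ∑ d, ∑ r, H b c r d)
      = ∑ p : α × α × α × α, H p.1 p.2.1 p.2.2.2 p.2.2.1 := by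
    simp [Fintype.sum_prod_type]
  rw [h1, h2]
  exact Fintype.sum_bijective (fun p => (p.1, p.2.1, p.2.2.2, p.2.2.1))
    (Function.Involutive.bijective fun p => rfl) _ _ (fun p => rfl)

set_option maxHeartbeats 2000000 in
/-- In `𝒲 = U(𝔤) ⊗ Cl(𝔤)`, the Dirac element `𝔇` is invariant:
`(u_a ⊗ 1 + 1 ⊗ g_a)·𝔇 = 𝔇·(u_a ⊗ 1 + 1 ⊗ g_a)` for every `a`. -/
theorem dirac_invariant
    {n : ℕ} {g : Type*} [LieRing g] [LieAlgebra ℝ g]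
    -- the ad-invariant inner product, as a symmetric bilinear form
    (ip : LinearMap.BilinForm ℝ g)
    (ip_symm : ∀ v w : g, ip v w = ip w v)
    (ip_inv : ∀ v w z : g, ip ⁅v, w⁆ z + ip w ⁅v, z⁆ = 0)
    -- an orthonormal basis
    (e : Module.Basis (Fin n) ℝ g)
    (he : ∀ a b, ip (e a) (e b) = if a = b then (1 : ℝ) else 0)
    -- the quadratic form Q(v) = ½⟨v,v⟩ and its Clifford algebra
    (Q : QuadraticForm ℝ g)
    (hQ : ∀ v, Q v = (1 / 2 : ℝ) * ip v v)
    -- structure constants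
    (f : Fin n → Fin n → Fin n → ℝ)
    (hf : ∀ a b c, f a b c = ip ⁅e a, e b⁆ (e c))
    -- the Clifford generators
    (x : Fin n → CliffordAlgebra Q)
    (hx : ∀ a, x a = CliffordAlgebra.ι Q (e a))
    -- the elements g_a = -½ ∑ f_{ars} x_r x_s
    (gc : Fin n → CliffordAlgebra Q)
    (hgc : ∀ a, gc a = (-(1 / 2 : ℝ)) • ∑ r, ∑ s, f a r s • (x r * x s))
    -- the element γ
    (γ : CliffordAlgebra Q)
    (hγ : γ = (-(1 / 6 : ℝ)) • ∑ a, ∑ b, ∑ c, f a b c • (x a * x b * x c))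
    -- the generators of the universal enveloping algebra
    (u : Fin n → UniversalEnvelopingAlgebra ℝ g)
    (hu : ∀ a, u a = UniversalEnvelopingAlgebra.ι ℝ (e a))
    -- the Dirac element 𝔇 in 𝒲 = U(𝔤) ⊗ Cl(𝔤)
    (D : UniversalEnvelopingAlgebra ℝ g ⊗[ℝ] CliffordAlgebra Q)
    (hD : D = ∑ a, u a ⊗ₜ[ℝ] x a + 1 ⊗ₜ[ℝ] γ)
    :
    ∀ a, (u a ⊗ₜ[ℝ] (1 : CliffordAlgebra Q) + 1 ⊗ₜ[ℝ] gc a) * D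
      = D * (u a ⊗ₜ[ℝ] (1 : CliffordAlgebra Q) + 1 ⊗ₜ[ℝ] gc a) := by
  classical
  -- expansion of a vector in the orthonormal basis
  have repr_eq : ∀ (v : g) (i : Fin n), e.repr v i = ip v (e i) := by
    intro v i
    conv_rhs => rw [← e.sum_repr v]
    simp only [map_sum, LinearMap.sum_apply, map_smul, LinearMap.smul_apply, smul_eq_mul, he,
      mul_ite, mul_one, mul_zero, Finset.sum_ite_eq', Finset.mem_univ, if_true]
  have expand : ∀ v : g, v = ∑ c, ip v (e c) • e c := by
    intro v
    conv_lhs => rw [← e.sum_repr v]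
    exact Finset.sum_congr rfl fun i _ => by rw [repr_eq]
  have hbr : ∀ a b, ⁅e a, e b⁆ = ∑ c, f a b c • e c := by
    intro a b
    conv_lhs => rw [expand ⁅e a, e b⁆]
    exact Finset.sum_congr rfl fun c _ => by rw [hf]
  -- skew-symmetry of f in its last two indices
  have skew : ∀ a b c, f a c b = - f a b c := by
    intro a b c
    have h := ip_inv (e a) (e c) (e b)
    rw [ip_symm (e c) ⁅e a, e b⁆] at h
    rw [hf, hf]
    linarith
  -- bilinearity helpers
  have ipl : ∀ (cs : Fin n → ℝ) (vs : Fin n → g) (w : g),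
      ip (∑ r, cs r • vs r) w = ∑ r, cs r * ip (vs r) w := by
    intro cs vs w
    simp only [map_sum, LinearMap.sum_apply, map_smul, LinearMap.smul_apply, smul_eq_mul]
  have ipr : ∀ (v : g) (cs : Fin n → ℝ) (vs : Fin n → g),
      ip v (∑ r, cs r • vs r) = ∑ r, cs r * ip v (vs r) := by
    intro v cs vs
    simp only [map_sum, map_smul, smul_eq_mul]
  have sum_lie' : ∀ (F : Fin n → g) (m : g), ⁅∑ i, F i, m⁆ = ∑ i, ⁅F i, m⁆ := by
    intro F m
    exact map_sum (AddMonoidHom.mk' (fun y => ⁅y, m⁆) fun y z => add_lie y z m) F Finset.univ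
  have lie_sum' : ∀ (m : g) (F : Fin n → g), ⁅m, ∑ i, F i⁆ = ∑ i, ⁅m, F i⁆ := by
    intro m F
    exact map_sum (AddMonoidHom.mk' (fun y => ⁅m, y⁆) fun y z => lie_add m y z) F Finset.univ
  -- invariance identity for the structure constants
  have hjac : ∀ a b c d,
      (∑ r, (f a b r * f r c d + f a c r * f b r d + f a d r * f b c r)) = 0 := by
    intro a b c d
    have h0 := ip_inv (e a) ⁅e b, e c⁆ (e d)
    rw [leibniz_lie] at h0
    rw [map_add, LinearMap.add_apply] at h0
    have t1 : ip ⁅⁅e a, e b⁆, e c⁆ (e d) = ∑ r, f a b r * f r c d := by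
      rw [hbr a b, sum_lie']
      simp_rw [smul_lie]
      rw [ipl]
      simp_rw [← hf]
    have t2 : ip ⁅e b, ⁅e a, e c⁆⁆ (e d) = ∑ r, f a c r * f b r d := by
      rw [hbr a c, lie_sum']
      simp_rw [lie_smul]
      rw [ipl]
      simp_rw [← hf]
    have t3 : ip ⁅e b, e c⁆ ⁅e a, e d⁆ = ∑ r, f a d r * f b c r := by
      rw [hbr a d, ipr]
      simp_rw [← hf]
    rw [t1, t2, t3] at h0
    rw [Finset.sum_add_distrib, Finset.sum_add_distrib]
    linarith
  -- Clifford anticommutation relations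
  have hanti : ∀ r s, x r * x s + x s * x r
      = (if r = s then (1 : ℝ) else 0) • (1 : CliffordAlgebra Q) := by
    intro r s
    rw [hx, hx, CliffordAlgebra.ι_mul_ι_add_swap, Algebra.algebraMap_eq_smul_one]
    congr 1
    have hsp : ip (e r + e s) (e r + e s)
        = ip (e r) (e r) + ip (e r) (e s) + (ip (e s) (e r) + ip (e s) (e s)) := by
      simp only [map_add, LinearMap.add_apply]
      ring
    simp only [QuadraticMap.polar, hQ, hsp]
    have := ip_symm (e s) (e r)
    rw [← he r s]
    linarith
  have htriple : ∀ r s b, x r * x s * x b - x b * (x r * x s)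
      = (if s = b then (1 : ℝ) else 0) • x r - (if r = b then (1 : ℝ) else 0) • x s := by
    intro r s b
    have e1 : x s * x b = (if s = b then (1 : ℝ) else 0) • 1 - x b * x s :=
      eq_sub_of_add_eq (hanti s b)
    have e2 : x r * x b = (if r = b then (1 : ℝ) else 0) • 1 - x b * x r :=
      eq_sub_of_add_eq (hanti r b)
    rw [mul_assoc, e1, mul_sub, mul_smul_comm, mul_one, ← mul_assoc, e2, sub_mul,
      smul_mul_assoc, one_mul, mul_assoc]
    abel
  -- commutator of gc a with a generator
  have hcom : ∀ a b, gc a * x b - x b * gc a = ∑ c, f a b c • x c := by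
    intro a b
    rw [hgc, smul_mul_assoc, mul_smul_comm, ← smul_sub]
    have expand2 : (∑ r, ∑ s, f a r s • (x r * x s)) * x b
        - x b * (∑ r, ∑ s, f a r s • (x r * x s))
        = ∑ r, ∑ s, f a r s • (x r * x s * x b - x b * (x r * x s)) := by
      simp only [Finset.sum_mul, Finset.mul_sum, smul_mul_assoc, mul_smul_comm]
      simp_rw [← Finset.sum_sub_distrib, ← smul_sub]
    rw [expand2]
    simp_rw [htriple]
    have inner : (∑ r, ∑ s, f a r s • ((if s = b then (1 : ℝ) else 0) • x r
          - (if r = b then (1 : ℝ) else 0) • x s))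
        = (∑ r, f a r b • x r) - ∑ s, f a b s • x s := by
      simp only [smul_sub, smul_smul, mul_ite, mul_one, mul_zero, ite_smul, zero_smul,
        Finset.sum_sub_distrib]
      congr 1
      · refine Finset.sum_congr rfl fun r _ => ?_
        simp [ite_smul, smul_ite, smul_zero, Finset.sum_ite_eq']
      · rw [Finset.sum_comm]
        refine Finset.sum_congr rfl fun s _ => ?_
        simp [ite_smul, smul_ite, smul_zero, Finset.sum_ite_eq']
    rw [inner]
    have p3 : (∑ r, f a r b • x r) = - ∑ r, f a b r • x r := by
      rw [← Finset.sum_neg_distrib]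
      exact Finset.sum_congr rfl fun r _ => by rw [skew a b r, neg_smul]
    rw [p3]
    module
  -- ring commutator identity for a triple product
  have tricomm : ∀ (A p q r : CliffordAlgebra Q),
      A * (p * q * r) - (p * q * r) * A
        = (A * p - p * A) * q * r + p * ((A * q - q * A) * r) + p * (q * (A * r - r * A)) := by
    intro A p q r
    noncomm_ring
  -- gc a commutes with γ
  have hgγ : ∀ a, gc a * γ = γ * gc a := by
    intro a
    rw [← sub_eq_zero, hγ, mul_smul_comm, smul_mul_assoc, ← smul_sub]
    have per0 : ∀ b c d, gc a * (x b * x c * x d) - x b * x c * x d * gc a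
        = (∑ r, f a b r • (x r * x c * x d)) + (∑ r, f a c r • (x b * x r * x d))
          + (∑ r, f a d r • (x b * x c * x r)) := by
      intro b c d
      rw [tricomm, hcom a b, hcom a c, hcom a d]
      simp only [Finset.sum_mul, Finset.mul_sum, smul_mul_assoc, mul_smul_comm, mul_assoc]
    have key : gc a * (∑ b, ∑ c, ∑ d, f b c d • (x b * x c * x d))
        - (∑ b, ∑ c, ∑ d, f b c d • (x b * x c * x d)) * gc a = 0 := by
      simp only [Finset.mul_sum, Finset.sum_mul, mul_smul_comm, smul_mul_assoc]
      simp_rw [← Finset.sum_sub_distrib, ← smul_sub, per0, smul_add, Finset.smul_sum, smul_smul]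
      simp only [Finset.sum_add_distrib]
      have swap1 : (∑ b, ∑ c, ∑ d, ∑ r, (f b c d * f a b r) • (x r * x c * x d))
          = ∑ b, ∑ c, ∑ d, ∑ r, (f r c d * f a r b) • (x b * x c * x d) := sum4_swap14 _
      have swap2 : (∑ b, ∑ c, ∑ d, ∑ r, (f b c d * f a c r) • (x b * x r * x d))
          = ∑ b, ∑ c, ∑ d, ∑ r, (f b r d * f a r c) • (x b * x c * x d) := sum4_swap24 _
      have swap3 : (∑ b, ∑ c, ∑ d, ∑ r, (f b c d * f a d r) • (x b * x c * x r))
          = ∑ b, ∑ c, ∑ d, ∑ r, (f b c r * f a r d) • (x b * x c * x d) := sum4_swap34 _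
      rw [swap1, swap2, swap3]
      simp_rw [← Finset.sum_add_distrib, ← add_smul, ← Finset.sum_smul]
      have hz : ∀ b c d, (∑ r, (f r c d * f a r b + f b r d * f a r c + f b c r * f a r d)) = 0 := by
        intro b c d
        have hp : ∀ r, f r c d * f a r b + f b r d * f a r c + f b c r * f a r d
            = -(f a b r * f r c d + f a c r * f b r d + f a d r * f b c r) := by
          intro r
          rw [skew a b r, skew a c r, skew a d r]
          ring
        simp_rw [hp]
        rw [Finset.sum_neg_distrib, hjac, neg_zero]
      simp_rw [hz, zero_smul, Finset.sum_const_zero]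
    rw [key, smul_zero]
  -- commutator in the enveloping algebra
  have hucsub : ∀ a b, u a * u b - u b * u a = ∑ c, f a b c • u c := by
    intro a b
    letI : LieRing (UniversalEnvelopingAlgebra ℝ g) := LieRing.ofAssociativeRing
    have h := (UniversalEnvelopingAlgebra.ι ℝ (L := g)).map_lie (e a) (e b)
    rw [hbr a b, Ring.lie_def] at h
    rw [show (UniversalEnvelopingAlgebra.ι ℝ (L := g)) (∑ c, f a b c • e c)
        = ∑ c, f a b c • (UniversalEnvelopingAlgebra.ι ℝ (L := g)) (e c) from by
      rw [← LieHom.coe_toLinearMap, map_sum]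
      exact Finset.sum_congr rfl fun c _ => map_smul _ _ _] at h
    simp only [← hu] at h
    exact h.symm
  intro a
  have hS : (u a ⊗ₜ[ℝ] (1 : CliffordAlgebra Q) + 1 ⊗ₜ[ℝ] gc a) * (∑ b, u b ⊗ₜ[ℝ] x b)
      = (∑ b, u b ⊗ₜ[ℝ] x b) * (u a ⊗ₜ[ℝ] (1 : CliffordAlgebra Q) + 1 ⊗ₜ[ℝ] gc a) := by
    rw [← sub_eq_zero, Finset.mul_sum, Finset.sum_mul, ← Finset.sum_sub_distrib]
    have per : ∀ b, (u a ⊗ₜ[ℝ] (1 : CliffordAlgebra Q) + 1 ⊗ₜ[ℝ] gc a) * (u b ⊗ₜ[ℝ] x b)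
        - (u b ⊗ₜ[ℝ] x b) * (u a ⊗ₜ[ℝ] (1 : CliffordAlgebra Q) + 1 ⊗ₜ[ℝ] gc a)
        = ∑ c, (f a b c • (u c ⊗ₜ[ℝ] x b) + f a b c • (u b ⊗ₜ[ℝ] x c)) := by
      intro b
      simp only [add_mul, mul_add, Algebra.TensorProduct.tmul_mul_tmul, one_mul, mul_one]
      rw [← sub_add_sub_comm, ← TensorProduct.sub_tmul, ← TensorProduct.tmul_sub, hucsub a b,
        hcom a b, TensorProduct.sum_tmul, TensorProduct.tmul_sum, ← Finset.sum_add_distrib]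
      exact Finset.sum_congr rfl fun c _ => by
        rw [← TensorProduct.smul_tmul', TensorProduct.tmul_smul]
    simp_rw [per]
    simp only [Finset.sum_add_distrib]
    rw [show (∑ b, ∑ c, f a b c • (u c ⊗ₜ[ℝ] x b))
        = ∑ b, ∑ c, f a c b • (u b ⊗ₜ[ℝ] x c) from Finset.sum_comm]
    simp_rw [← Finset.sum_add_distrib, ← add_smul]
    have hz : ∀ b c : Fin n, f a c b + f a b c = 0 := fun b c => by rw [skew a b c]; ring
    simp_rw [hz, zero_smul, Finset.sum_const_zero]
  rw [hD, mul_add, add_mul (∑ b, u b ⊗ₜ[ℝ] x b) (1 ⊗ₜ[ℝ] γ), hS]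
  congr 1
  simp only [add_mul, mul_add, Algebra.TensorProduct.tmul_mul_tmul, one_mul, mul_one, hgγ a]
end

section
/- In 𝒲 = U(𝔤) ⊗ Cl(𝔤), the element 𝔇² is central: 𝔇²·w = w·𝔇² for all w ∈ 𝒲. (Consequently the super-commutator with 𝔇 is a differential on 𝒲.) -/
open scoped TensorProduct

section helpers
variable {n : ℕ} {M : Type*} [AddCommMonoid M]

theorem rot3 (F : Fin n → Fin n → Fin n → M) :
    ∑ a, ∑ b, ∑ c, F a b c = ∑ b, ∑ c, ∑ a, F a b c := by
  rw [Finset.sum_comm]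
  exact Finset.sum_congr rfl fun b _ => Finset.sum_comm

theorem rot4 (F : Fin n → Fin n → Fin n → Fin n → M) :
    ∑ a, ∑ b, ∑ c, ∑ d, F a b c d = ∑ b, ∑ c, ∑ d, ∑ a, F a b c d := by
  rw [Finset.sum_comm]
  exact Finset.sum_congr rfl fun b _ => rot3 _

theorem swap23 (F : Fin n → Fin n → Fin n → M) :
    ∑ a, ∑ b, ∑ c, F a b c = ∑ a, ∑ c, ∑ b, F a b c :=
  Finset.sum_congr rfl fun a _ => Finset.sum_comm

end helpers

/-- Induction principle for the universal enveloping algebra. -/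
theorem uea_induction {R L : Type*} [CommRing R] [LieRing L] [LieAlgebra R L]
    {P : UniversalEnvelopingAlgebra R L → Prop}
    (halg : ∀ r, P (algebraMap R (UniversalEnvelopingAlgebra R L) r))
    (hι : ∀ v, P (UniversalEnvelopingAlgebra.ι R v))
    (hmul : ∀ a b, P a → P b → P (a * b))
    (hadd : ∀ a b, P a → P b → P (a + b))
    (a : UniversalEnvelopingAlgebra R L) : P a := by
  obtain ⟨t, rfl⟩ : ∃ t, UniversalEnvelopingAlgebra.mkAlgHom R L t = a :=
    RingCon.mkₐ_surjective _ a
  induction t using TensorAlgebra.induction with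
  | algebraMap r => rw [AlgHom.commutes]; exact halg r
  | ι v => exact hι v
  | mul a b ha hb => rw [map_mul]; exact hmul _ _ ha hb
  | add a b ha hb => rw [map_add]; exact hadd _ _ ha hb

/-- commutator with a triple product (Leibniz). -/
theorem comm3 {A : Type*} [Ring A] (g p q r : A) :
    g * (p * q * r) - (p * q * r) * g =
      (g * p - p * g) * q * r + p * (g * q - q * g) * r + p * q * (g * r - r * g) := by
  noncomm_ring

section generic
variable {n : ℕ} {A : Type*} [Ring A] [Algebra ℝ A]
variable (f : Fin n → Fin n → Fin n → ℝ) (x : Fin n → A)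

/-- `x r x s x b - x b x r x s = δ_{sb} x r - δ_{rb} x s`. -/
theorem cliff_comm2
    (hxx' : ∀ a b, x a * x b = (if a = b then (1:ℝ) else 0) • 1 - x b * x a)
    (r s b : Fin n) :
    x r * x s * x b - x b * (x r * x s)
      = (if s = b then (1:ℝ) else 0) • x r - (if r = b then (1:ℝ) else 0) • x s := by
  rw [mul_assoc, hxx' s b, mul_sub, ← mul_assoc, hxx' r b]
  simp only [mul_smul_comm, smul_mul_assoc, sub_mul, mul_one, one_mul, mul_assoc]
  abel

/-- `[G a, x b] = ∑ f a b r • x r`. -/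
theorem cliff_Gx
    (hxx' : ∀ a b, x a * x b = (if a = b then (1:ℝ) else 0) • 1 - x b * x a)
    (hf23 : ∀ a b c, f a c b = - f a b c)
    (a b : Fin n) :
    ((-(1/2:ℝ)) • ∑ r, ∑ s, f a r s • (x r * x s)) * x b
      - x b * ((-(1/2:ℝ)) • ∑ r, ∑ s, f a r s • (x r * x s))
      = ∑ r, f a b r • x r := by
  rw [smul_mul_assoc, mul_smul_comm, ← smul_sub]
  have h1 : (∑ r, ∑ s, f a r s • (x r * x s)) * x b
      - x b * (∑ r, ∑ s, f a r s • (x r * x s))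
      = ∑ r, ∑ s, f a r s • (x r * x s * x b - x b * (x r * x s)) := by
    rw [Finset.sum_mul, Finset.mul_sum, ← Finset.sum_sub_distrib]
    refine Finset.sum_congr rfl fun r _ => ?_
    rw [Finset.sum_mul, Finset.mul_sum, ← Finset.sum_sub_distrib]
    refine Finset.sum_congr rfl fun s _ => ?_
    rw [smul_mul_assoc, mul_smul_comm, smul_sub]
  rw [h1]
  have h2 : ∀ r s : Fin n, f a r s • (x r * x s * x b - x b * (x r * x s))
      = (if s = b then f a r s else 0) • x r - (if r = b then f a r s else 0) • x s := by
    intro r s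
    rw [cliff_comm2 x hxx', smul_sub, smul_smul, smul_smul]
    simp only [mul_ite, mul_one, mul_zero]
  simp only [h2]
  simp only [Finset.sum_sub_distrib]
  have h4 : ∑ r, ∑ s, (if s = b then f a r s else 0) • x r = ∑ r, f a r b • x r := by
    simp [ite_smul, Finset.sum_ite_eq', Finset.mem_univ]
  have h5 : ∑ r, ∑ s, (if r = b then f a r s else 0) • x s = ∑ s, f a b s • x s := by
    rw [Finset.sum_comm]
    simp [ite_smul, Finset.sum_ite_eq', Finset.mem_univ]
  rw [h4, h5]
  have h3 : ∑ r, f a r b • x r = - ∑ r, f a b r • x r := by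
    rw [← Finset.sum_neg_distrib]
    exact Finset.sum_congr rfl fun r _ => by rw [hf23, neg_smul]
  rw [h3]
  module

end generic

section generic2
variable {n : ℕ} {A : Type*} [Ring A] [Algebra ℝ A]
variable (f : Fin n → Fin n → Fin n → ℝ) (x : Fin n → A)

theorem cliff_triple
    (hxx' : ∀ a b, x a * x b = (if a = b then (1:ℝ) else 0) • 1 - x b * x a)
    (a b c d : Fin n) :
    x a * (x b * x c * x d) + x b * x c * x d * x a
      = (if b = a then (1:ℝ) else 0) • (x c * x d)
        - (if c = a then (1:ℝ) else 0) • (x b * x d)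
        + (if d = a then (1:ℝ) else 0) • (x b * x c) := by
  have e1 : x b * x c * x d * x a
      = (if d = a then (1:ℝ) else 0) • (x b * x c) - x b * x c * x a * x d := by
    rw [mul_assoc (x b * x c), hxx' d a, mul_sub, mul_smul_comm, mul_one, ← mul_assoc]
  have e2 : x b * x c * x a = (if c = a then (1:ℝ) else 0) • x b - x b * x a * x c := by
    rw [mul_assoc, hxx' c a, mul_sub, mul_smul_comm, mul_one, ← mul_assoc]
  rw [e1, e2, hxx' b a]
  simp only [sub_mul, smul_mul_assoc, one_mul, mul_assoc]
  abel

/-- `{x a, γ} = G a`. -/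
theorem cliff_anti
    (hxx' : ∀ a b, x a * x b = (if a = b then (1:ℝ) else 0) • 1 - x b * x a)
    (hf12 : ∀ a b c, f b a c = - f a b c)
    (hcyc : ∀ a b c, f a b c = f c a b)
    (a : Fin n) :
    x a * ((-(1/6:ℝ)) • ∑ b, ∑ c, ∑ d, f b c d • (x b * x c * x d))
      + ((-(1/6:ℝ)) • ∑ b, ∑ c, ∑ d, f b c d • (x b * x c * x d)) * x a
      = (-(1/2:ℝ)) • ∑ r, ∑ s, f a r s • (x r * x s) := by
  rw [mul_smul_comm, smul_mul_assoc, ← smul_add]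
  have h1 : x a * (∑ b, ∑ c, ∑ d, f b c d • (x b * x c * x d))
      + (∑ b, ∑ c, ∑ d, f b c d • (x b * x c * x d)) * x a
      = ∑ b, ∑ c, ∑ d, f b c d •
          (x a * (x b * x c * x d) + x b * x c * x d * x a) := by
    rw [Finset.mul_sum, Finset.sum_mul, ← Finset.sum_add_distrib]
    refine Finset.sum_congr rfl fun b _ => ?_
    rw [Finset.mul_sum, Finset.sum_mul, ← Finset.sum_add_distrib]
    refine Finset.sum_congr rfl fun c _ => ?_
    rw [Finset.mul_sum, Finset.sum_mul, ← Finset.sum_add_distrib]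
    refine Finset.sum_congr rfl fun d _ => ?_
    rw [mul_smul_comm, smul_mul_assoc, smul_add]
  rw [h1]
  simp only [cliff_triple x hxx', smul_sub, smul_add, smul_smul, mul_ite, mul_one, mul_zero,
    ite_smul, zero_smul, smul_ite, smul_zero, one_smul, Finset.sum_add_distrib, Finset.sum_sub_distrib]
  have c1 : ∑ b, ∑ c, ∑ d, (if b = a then f b c d • (x c * x d) else 0)
      = ∑ c, ∑ d, f a c d • (x c * x d) := by
    simp [Finset.sum_ite_eq', Finset.mem_univ]
  have c2 : ∑ b, ∑ c, ∑ d, (if c = a then f b c d • (x b * x d) else 0)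
      = ∑ b, ∑ d, f b a d • (x b * x d) := by
    simp [Finset.sum_ite_eq', Finset.mem_univ]
  have c3 : ∑ b, ∑ c, ∑ d, (if d = a then f b c d • (x b * x c) else 0)
      = ∑ b, ∑ c, f b c a • (x b * x c) := by
    simp [Finset.sum_ite_eq', Finset.mem_univ]
  rw [c1, c2, c3]
  have d2 : ∑ b, ∑ d, f b a d • (x b * x d) = - ∑ c, ∑ d, f a c d • (x c * x d) := by
    rw [← Finset.sum_neg_distrib]
    refine Finset.sum_congr rfl fun b _ => ?_
    rw [← Finset.sum_neg_distrib]
    exact Finset.sum_congr rfl fun d _ => by rw [hf12, neg_smul]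
  have d3 : ∑ b, ∑ c, f b c a • (x b * x c) = ∑ c, ∑ d, f a c d • (x c * x d) := by
    refine Finset.sum_congr rfl fun b _ => Finset.sum_congr rfl fun c _ => ?_
    rw [hcyc b c a]
  rw [d2, d3]
  module
end generic2

section generic3
variable {n : ℕ} {A : Type*} [Ring A] [Algebra ℝ A]
variable (f : Fin n → Fin n → Fin n → ℝ) (x : Fin n → A)

/-- `[G a, γ] = 0`. -/
theorem cliff_Gg
    (hxx' : ∀ a b, x a * x b = (if a = b then (1:ℝ) else 0) • 1 - x b * x a)
    (hf12 : ∀ a b c, f b a c = - f a b c)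
    (hf23 : ∀ a b c, f a c b = - f a b c)
    (hcyc : ∀ a b c, f a b c = f c a b)
    (hjac : ∀ w y z s, (∑ c, f w y c * f c z s) + (∑ c, f y z c * f c w s)
      + (∑ c, f z w c * f c y s) = 0)
    (a : Fin n) :
    ((-(1/2:ℝ)) • ∑ r, ∑ s, f a r s • (x r * x s)) *
        ((-(1/6:ℝ)) • ∑ b, ∑ c, ∑ d, f b c d • (x b * x c * x d))
      = ((-(1/6:ℝ)) • ∑ b, ∑ c, ∑ d, f b c d • (x b * x c * x d)) *
        ((-(1/2:ℝ)) • ∑ r, ∑ s, f a r s • (x r * x s)) := by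
  set G : A := (-(1/2:ℝ)) • ∑ r, ∑ s, f a r s • (x r * x s) with hG
  rw [← sub_eq_zero]
  have hT : G * ((-(1/6:ℝ)) • ∑ b, ∑ c, ∑ d, f b c d • (x b * x c * x d))
      - ((-(1/6:ℝ)) • ∑ b, ∑ c, ∑ d, f b c d • (x b * x c * x d)) * G
      = (-(1/6:ℝ)) • ∑ b, ∑ c, ∑ d, f b c d •
          (G * (x b * x c * x d) - (x b * x c * x d) * G) := by
    rw [mul_smul_comm (-(1/6:ℝ)) G, smul_mul_assoc (-(1/6:ℝ)) _ G, ← smul_sub]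
    congr 1
    rw [Finset.mul_sum, Finset.sum_mul, ← Finset.sum_sub_distrib]
    refine Finset.sum_congr rfl fun b _ => ?_
    rw [Finset.mul_sum, Finset.sum_mul, ← Finset.sum_sub_distrib]
    refine Finset.sum_congr rfl fun c _ => ?_
    rw [Finset.mul_sum, Finset.sum_mul, ← Finset.sum_sub_distrib]
    refine Finset.sum_congr rfl fun d _ => ?_
    rw [mul_smul_comm (f b c d) G, smul_mul_assoc (f b c d) _ G, smul_sub]
  rw [hT]
  have hGx' : ∀ b, G * x b - x b * G = ∑ r, f a b r • x r := fun b =>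
    cliff_Gx f x hxx' hf23 a b
  have hterm : ∀ b c d : Fin n, G * (x b * x c * x d) - (x b * x c * x d) * G
      = (∑ r, f a b r • x r) * x c * x d + x b * ((∑ r, f a c r • x r) * x d)
        + x b * x c * (∑ r, f a d r • x r) := by
    intro b c d
    rw [comm3, hGx' b, hGx' c, hGx' d, mul_assoc (x b)]
  simp only [hterm]
  -- expand the three groups
  have expand : ∀ b c d : Fin n, f b c d •
      ((∑ r, f a b r • x r) * x c * x d + x b * ((∑ r, f a c r • x r) * x d)
        + x b * x c * (∑ r, f a d r • x r))
      = (∑ r, (f b c d * f a b r) • (x r * x c * x d))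
        + (∑ r, (f b c d * f a c r) • (x b * x r * x d))
        + (∑ r, (f b c d * f a d r) • (x b * x c * x r)) := by
    intro b c d
    rw [smul_add, smul_add]
    congr 1
    · congr 1
      · rw [Finset.sum_mul, Finset.sum_mul, Finset.smul_sum]
        refine Finset.sum_congr rfl fun r _ => ?_
        rw [smul_mul_assoc, smul_mul_assoc, smul_smul]
      · rw [Finset.sum_mul, Finset.mul_sum, Finset.smul_sum]
        refine Finset.sum_congr rfl fun r _ => ?_
        rw [smul_mul_assoc, mul_smul_comm, smul_smul, mul_assoc]
    · rw [Finset.mul_sum, Finset.smul_sum]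
      refine Finset.sum_congr rfl fun r _ => ?_
      rw [mul_smul_comm, smul_smul]
  simp only [expand, Finset.sum_add_distrib]
  -- canonical forms of the three quadruple sums
  have t1 : ∑ b, ∑ c, ∑ d, ∑ r, (f b c d * f a b r) • (x r * x c * x d)
      = ∑ p, ∑ q, ∑ s, (∑ e, f p a e * f e q s) • (x p * x q * x s) := by
    rw [rot4]
    -- now ∑ c ∑ d ∑ r ∑ b; outer order (c,d,r) with X = x r * x c * x d
    rw [show ∑ c, ∑ d, ∑ r, ∑ b, (f b c d * f a b r) • (x r * x c * x d)
        = ∑ c, ∑ d, ∑ r, (∑ b, f b c d * f a b r) • (x r * x c * x d) from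
      Finset.sum_congr rfl fun c _ => Finset.sum_congr rfl fun d _ =>
        Finset.sum_congr rfl fun r _ => (Finset.sum_smul).symm]
    rw [← rot3]
    -- ∑ r ∑ c ∑ d : matches (p,q,s) = (r,c,d)
    refine Finset.sum_congr rfl fun p _ => Finset.sum_congr rfl fun q _ =>
      Finset.sum_congr rfl fun s _ => ?_
    congr 1
    refine Finset.sum_congr rfl fun e _ => ?_
    rw [show f a e p = f p a e from hcyc a e p]
    ring
  have t2 : ∑ b, ∑ c, ∑ d, ∑ r, (f b c d * f a c r) • (x b * x r * x d)
      = ∑ p, ∑ q, ∑ s, (∑ e, f a q e * f e p s) • (x p * x q * x s) := by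
    refine Finset.sum_congr rfl fun p _ => ?_
    rw [rot3, rot3, swap23]
    -- inner order now (q, s, e) with X = x p * x e'?? check
    refine Finset.sum_congr rfl fun q _ => Finset.sum_congr rfl fun s _ => ?_
    rw [← Finset.sum_smul]
    congr 1
    refine Finset.sum_congr rfl fun e _ => ?_
    rw [hf12 e p s, hf23 a q e]
    ring
  have t3 : ∑ b, ∑ c, ∑ d, ∑ r, (f b c d * f a d r) • (x b * x c * x r)
      = ∑ p, ∑ q, ∑ s, (∑ e, f q p e * f e a s) • (x p * x q * x s) := by
    refine Finset.sum_congr rfl fun p _ => Finset.sum_congr rfl fun q _ => ?_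
    rw [Finset.sum_comm]
    refine Finset.sum_congr rfl fun s _ => ?_
    rw [← Finset.sum_smul]
    congr 1
    refine Finset.sum_congr rfl fun e _ => ?_
    rw [hf12 q p e, hf12 e a s]
    ring
  rw [t1, t2, t3]
  simp only [← Finset.sum_add_distrib, ← add_smul]
  have hzero : ∀ p q s : Fin n,
      (∑ e, (f p a e * f e q s + f a q e * f e p s + f q p e * f e a s)) = (0:ℝ) := by
    intro p q s
    rw [Finset.sum_add_distrib, Finset.sum_add_distrib]
    exact hjac p a q s
  simp only [hzero, zero_smul, Finset.sum_const_zero, smul_zero]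
end generic3

section casimir
variable {n : ℕ} {A : Type*} [Ring A] [Algebra ℝ A]
variable (f : Fin n → Fin n → Fin n → ℝ) (u : Fin n → A)

theorem casimir_comm
    (huu : ∀ a b, u a * u b = u b * u a + ∑ c, f a b c • u c)
    (hf13 : ∀ a b c, f c b a = - f a b c)
    (b : Fin n) :
    (∑ a, u a * u a) * u b = u b * ∑ a, u a * u a := by
  rw [← sub_eq_zero, Finset.sum_mul, Finset.mul_sum, ← Finset.sum_sub_distrib]
  have key : ∀ a, u a * u a * u b - u b * (u a * u a)
      = (∑ c, f a b c • u c) * u a + u a * ∑ c, f a b c • u c := by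
    intro a
    rw [mul_assoc, huu a b, mul_add, ← mul_assoc, huu a b, add_mul, mul_assoc (u b)]
    abel
  simp only [key]
  have expand : ∀ a, (∑ c, f a b c • u c) * u a + u a * ∑ c, f a b c • u c
      = ∑ c, f a b c • (u c * u a + u a * u c) := by
    intro a
    rw [Finset.sum_mul, Finset.mul_sum, ← Finset.sum_add_distrib]
    refine Finset.sum_congr rfl fun c _ => ?_
    rw [smul_mul_assoc, mul_smul_comm, smul_add]
  simp only [expand]
  have hanti : (∑ a, ∑ c, f a b c • (u c * u a + u a * u c))
      = - ∑ a, ∑ c, f a b c • (u c * u a + u a * u c) := by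
    conv_lhs => rw [Finset.sum_comm]
    rw [← Finset.sum_neg_distrib]
    refine Finset.sum_congr rfl fun k _ => ?_
    rw [← Finset.sum_neg_distrib]
    refine Finset.sum_congr rfl fun j _ => ?_
    rw [hf13 j b k, neg_smul, neg_neg, add_comm (u j * u k)]
  set S : A := ∑ a, ∑ c, f a b c • (u c * u a + u a * u c) with hS
  calc S = (1/2:ℝ) • (S + S) := by module
    _ = 0 := by nth_rewrite 2 [hanti]; rw [add_neg_cancel, smul_zero]
end casimir

section tensorsq
variable {n : ℕ} {A B : Type*} [Ring A] [Algebra ℝ A] [Ring B] [Algebra ℝ B]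
variable (f : Fin n → Fin n → Fin n → ℝ) (u : Fin n → A) (x : Fin n → B) (γ' : B)

theorem dirac_square_eq
    (huu : ∀ a b, u a * u b = u b * u a + ∑ c, f a b c • u c)
    (hxx' : ∀ a b, x a * x b = (if a = b then (1:ℝ) else 0) • 1 - x b * x a)
    (hcyc : ∀ a b c, f a b c = f c a b)
    (hG : ∀ a, x a * γ' + γ' * x a = (-(1/2:ℝ)) • ∑ r, ∑ s, f a r s • (x r * x s)) :
    (∑ a, u a ⊗ₜ[ℝ] x a + 1 ⊗ₜ[ℝ] γ') * (∑ a, u a ⊗ₜ[ℝ] x a + 1 ⊗ₜ[ℝ] γ')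
      = ((1/2:ℝ) • ∑ a, u a * u a) ⊗ₜ[ℝ] 1 + 1 ⊗ₜ[ℝ] (γ' * γ') := by
  set S : A ⊗[ℝ] B := ∑ a, u a ⊗ₜ[ℝ] x a with hSdef
  set T : A ⊗[ℝ] B := (1:A) ⊗ₜ[ℝ] γ' with hTdef
  have hexp : (S + T) * (S + T) = S*S + (S*T + T*S) + T*T := by noncomm_ring
  have hTT : T*T = (1:A) ⊗ₜ[ℝ] (γ'*γ') := by
    rw [hTdef, Algebra.TensorProduct.tmul_mul_tmul, one_mul]
  have hST : S*T + T*S = ∑ a, u a ⊗ₜ[ℝ] (x a * γ' + γ' * x a) := by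
    rw [hSdef, hTdef, Finset.sum_mul, Finset.mul_sum, ← Finset.sum_add_distrib]
    refine Finset.sum_congr rfl fun a _ => ?_
    rw [Algebra.TensorProduct.tmul_mul_tmul, Algebra.TensorProduct.tmul_mul_tmul,
      mul_one, one_mul, ← TensorProduct.tmul_add]
  have hSS : S*S = ∑ a, ∑ b, (u a * u b) ⊗ₜ[ℝ] (x a * x b) := by
    rw [hSdef, Finset.sum_mul_sum]
    simp only [Algebra.TensorProduct.tmul_mul_tmul]
  have hcomm_u : ∀ a b, u a * u b - u b * u a = ∑ c, f a b c • u c := by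
    intro a b; rw [huu a b, add_sub_cancel_left]
  have hpair : ∀ a b, (u a * u b) ⊗ₜ[ℝ] (x a * x b) + (u b * u a) ⊗ₜ[ℝ] (x b * x a)
      = (if b = a then (1:ℝ) else 0) • ((u b * u a) ⊗ₜ[ℝ] (1:B))
        + ∑ c, f a b c • (u c ⊗ₜ[ℝ] (x a * x b)) := by
    intro a b
    rw [hxx' b a, TensorProduct.tmul_sub, TensorProduct.tmul_smul]
    have : (u a * u b) ⊗ₜ[ℝ] (x a * x b) - (u b * u a) ⊗ₜ[ℝ] (x a * x b)
        = ∑ c, f a b c • (u c ⊗ₜ[ℝ] (x a * x b)) := by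
      rw [← TensorProduct.sub_tmul, hcomm_u a b, TensorProduct.sum_tmul]
      exact Finset.sum_congr rfl fun c _ => TensorProduct.smul_tmul' _ _ _
    rw [← this]
    abel
  have hdouble : (∑ a, ∑ b, (u a * u b) ⊗ₜ[ℝ] (x a * x b))
        + (∑ a, ∑ b, (u a * u b) ⊗ₜ[ℝ] (x a * x b))
      = (∑ a, u a * u a) ⊗ₜ[ℝ] (1:B)
        + ∑ a, ∑ b, ∑ c, f a b c • (u c ⊗ₜ[ℝ] (x a * x b)) := by
    nth_rewrite 2 [Finset.sum_comm]
    rw [← Finset.sum_add_distrib]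
    have : ∀ a, ((∑ b, (u a * u b) ⊗ₜ[ℝ] (x a * x b)) + ∑ b, (u b * u a) ⊗ₜ[ℝ] (x b * x a))
        = (u a * u a) ⊗ₜ[ℝ] (1:B) + ∑ b, ∑ c, f a b c • (u c ⊗ₜ[ℝ] (x a * x b)) := by
      intro a
      rw [← Finset.sum_add_distrib]
      simp only [hpair]
      rw [Finset.sum_add_distrib]
      congr 1
      simp [Finset.sum_ite_eq', Finset.mem_univ]
    simp only [this]
    rw [Finset.sum_add_distrib, ← TensorProduct.sum_tmul]
  have hreindex : ∑ a, ∑ b, ∑ c, f a b c • (u c ⊗ₜ[ℝ] (x a * x b))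
      = ∑ c, u c ⊗ₜ[ℝ] (∑ a, ∑ b, f c a b • (x a * x b)) := by
    rw [rot3, rot3]
    refine Finset.sum_congr rfl fun c _ => ?_
    rw [TensorProduct.tmul_sum]
    refine Finset.sum_congr rfl fun a _ => ?_
    rw [TensorProduct.tmul_sum]
    refine Finset.sum_congr rfl fun b _ => ?_
    rw [hcyc a b c, TensorProduct.tmul_smul]
  have hGsum : ∑ a, u a ⊗ₜ[ℝ] (x a * γ' + γ' * x a)
      = (-(1/2:ℝ)) • ∑ a, u a ⊗ₜ[ℝ] (∑ r, ∑ s, f a r s • (x r * x s)) := by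
    rw [Finset.smul_sum]
    refine Finset.sum_congr rfl fun a _ => ?_
    rw [hG a, TensorProduct.tmul_smul]
  have hP : (∑ a, ∑ b, (u a * u b) ⊗ₜ[ℝ] (x a * x b))
      = (1/2:ℝ) • ((∑ a, ∑ b, (u a * u b) ⊗ₜ[ℝ] (x a * x b))
          + ∑ a, ∑ b, (u a * u b) ⊗ₜ[ℝ] (x a * x b)) := by module
  rw [hexp, hSS, hST, hTT, hGsum, hP, hdouble, hreindex, ← TensorProduct.smul_tmul']
  module
end tensorsq

set_option maxHeartbeats 1000000 in
/-- In `𝒲 = U(𝔤) ⊗ Cl(𝔤)`, the element `𝔇²` is central: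
`𝔇²·w = w·𝔇²` for all `w ∈ 𝒲`. -/
theorem dirac_square_central
    {n : ℕ} {g : Type*} [LieRing g] [LieAlgebra ℝ g]
    -- the ad-invariant inner product, as a symmetric bilinear form
    (ip : LinearMap.BilinForm ℝ g)
    (ip_symm : ∀ v w : g, ip v w = ip w v)
    (ip_inv : ∀ v w z : g, ip ⁅v, w⁆ z + ip w ⁅v, z⁆ = 0)
    -- an orthonormal basis
    (e : Module.Basis (Fin n) ℝ g)
    (he : ∀ a b, ip (e a) (e b) = if a = b then (1 : ℝ) else 0)
    -- the quadratic form Q(v) = ½⟨v,v⟩ and its Clifford algebra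
    (Q : QuadraticForm ℝ g)
    (hQ : ∀ v, Q v = (1 / 2 : ℝ) * ip v v)
    -- structure constants
    (f : Fin n → Fin n → Fin n → ℝ)
    (hf : ∀ a b c, f a b c = ip ⁅e a, e b⁆ (e c))
    -- the Clifford generators
    (x : Fin n → CliffordAlgebra Q)
    (hx : ∀ a, x a = CliffordAlgebra.ι Q (e a))
    -- the element γ
    (γ : CliffordAlgebra Q)
    (hγ : γ = (-(1 / 6 : ℝ)) • ∑ a, ∑ b, ∑ c, f a b c • (x a * x b * x c))
    -- the generators of the universal enveloping algebra
    (u : Fin n → UniversalEnvelopingAlgebra ℝ g)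
    (hu : ∀ a, u a = UniversalEnvelopingAlgebra.ι ℝ (e a))
    -- the Dirac element 𝔇 in 𝒲 = U(𝔤) ⊗ Cl(𝔤)
    (D : UniversalEnvelopingAlgebra ℝ g ⊗[ℝ] CliffordAlgebra Q)
    (hD : D = ∑ a, u a ⊗ₜ[ℝ] x a + 1 ⊗ₜ[ℝ] γ)
    :
    ∀ w : UniversalEnvelopingAlgebra ℝ g ⊗[ℝ] CliffordAlgebra Q,
      D * D * w = w * (D * D) := by
  letI : LieRing (UniversalEnvelopingAlgebra ℝ g) := LieRing.ofAssociativeRing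
  have hrepr : ∀ (v : g) (c : Fin n), ip v (e c) = e.repr v c := by
    intro v c
    conv_lhs => rw [← e.sum_repr v]
    rw [map_sum]
    simp only [map_smul, LinearMap.smul_apply, smul_eq_mul]
    simp [he]
  have hbracket : ∀ a b, ⁅e a, e b⁆ = ∑ c, f a b c • e c := by
    intro a b
    conv_lhs => rw [← e.sum_repr ⁅e a, e b⁆]
    refine Finset.sum_congr rfl fun c _ => ?_
    rw [hf, hrepr]
  have hf12 : ∀ a b c, f b a c = - f a b c := by
    intro a b c
    rw [hf, hf, ← lie_skew (e a) (e b), map_neg, LinearMap.neg_apply, neg_neg]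
  have hf23 : ∀ a b c, f a c b = - f a b c := by
    intro a b c
    have h := ip_inv (e a) (e b) (e c)
    rw [hf, hf, ip_symm ⁅e a, e c⁆ (e b)]
    linarith
  have hcyc : ∀ a b c, f a b c = f c a b := by
    intro a b c
    have hA := hf23 c b a
    have hB := hf12 b c a
    have hC := hf23 b a c
    have hD := hf12 a b c
    linarith
  have hsum_lie : ∀ (F : Fin n → g) (m : g), ⁅(∑ c, F c), m⁆ = ∑ c, ⁅F c, m⁆ := by
    intro F m
    exact map_sum (⟨⟨fun v => ⁅v, m⁆, zero_lie m⟩, fun a b => add_lie a b m⟩ : g →+ g) F _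
  have hpair : ∀ a p q s, ip ⁅⁅e a, e p⁆, e q⁆ (e s) = ∑ c, f a p c * f c q s := by
    intro a p q s
    rw [hbracket a p, hsum_lie, map_sum, LinearMap.coe_sum, Finset.sum_apply]
    refine Finset.sum_congr rfl fun c _ => ?_
    rw [smul_lie, map_smul, LinearMap.smul_apply, smul_eq_mul, ← hf]
  have hjac : ∀ w y z s, (∑ c, f w y c * f c z s) + (∑ c, f y z c * f c w s)
      + (∑ c, f z w c * f c y s) = 0 := by
    intro w y z s
    have hJ : ⁅⁅e w, e y⁆, e z⁆ + ⁅⁅e y, e z⁆, e w⁆ + ⁅⁅e z, e w⁆, e y⁆ = 0 := by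
      have h := lie_jacobi (e w) (e y) (e z)
      calc ⁅⁅e w, e y⁆, e z⁆ + ⁅⁅e y, e z⁆, e w⁆ + ⁅⁅e z, e w⁆, e y⁆
          = -(⁅e z, ⁅e w, e y⁆⁆ + ⁅e w, ⁅e y, e z⁆⁆ + ⁅e y, ⁅e z, e w⁆⁆) := by
            rw [← lie_skew ⁅e w, e y⁆ (e z), ← lie_skew ⁅e y, e z⁆ (e w),
              ← lie_skew ⁅e z, e w⁆ (e y)]
            abel
        _ = 0 := by rw [show ⁅e z, ⁅e w, e y⁆⁆ + ⁅e w, ⁅e y, e z⁆⁆ + ⁅e y, ⁅e z, e w⁆⁆ = 0 by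
              rw [← h]; abel, neg_zero]
    have h2 := congrArg (fun v => ip v (e s)) hJ
    simp only [map_add, LinearMap.add_apply, map_zero, LinearMap.zero_apply, hpair] at h2
    linarith [h2]

  -- Clifford generator relation
  have hxx' : ∀ a b, x a * x b = (if a = b then (1:ℝ) else 0) • (1 : CliffordAlgebra Q) - x b * x a := by
    intro a b
    have hpolar : QuadraticMap.polar Q (e a) (e b) = if a = b then (1:ℝ) else 0 := by
      have hv : Q (e a + e b) - Q (e a) - Q (e b) = ip (e a) (e b) := by
        rw [hQ, hQ, hQ]
        simp only [map_add, LinearMap.add_apply]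
        rw [ip_symm (e b) (e a)]
        ring
      rw [QuadraticMap.polar, hv, he]
    have h := CliffordAlgebra.ι_mul_ι_add_swap (Q := Q) (e a) (e b)
    rw [hpolar, ← hx a, ← hx b, Algebra.algebraMap_eq_smul_one] at h
    rw [← h]
    abel
  -- universal enveloping algebra commutator relation
  have huu : ∀ a b, u a * u b = u b * u a + ∑ c, f a b c • u c := by
    intro a b
    have h2 : UniversalEnvelopingAlgebra.ι ℝ ⁅e a, e b⁆ = u a * u b - u b * u a := by
      rw [LieHom.map_lie, Ring.lie_def, hu, hu]
    have h3 : u a * u b - u b * u a = ∑ c, f a b c • u c := by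
      rw [← h2, hbracket a b, ← LieHom.coe_toLinearMap, map_sum]
      simp only [map_smul, LieHom.coe_toLinearMap, ← hu]
    exact (eq_add_of_sub_eq h3).trans (add_comm _ _)
  have hf13 : ∀ a b c, f c b a = - f a b c := by
    intro a b c
    calc f c b a = - f c a b := hf23 c a b
      _ = - f a b c := by rw [← hcyc a b c]
  -- the adjoint-action elements G and the key Clifford identities
  have hA : ∀ b, x b * γ + γ * x b = (-(1/2:ℝ)) • ∑ r, ∑ s, f b r s • (x r * x s) := by
    intro b
    rw [hγ]
    exact cliff_anti f x hxx' hf12 hcyc b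
  have hB : ∀ b, ((-(1/2:ℝ)) • ∑ r, ∑ s, f b r s • (x r * x s)) * γ
      = γ * ((-(1/2:ℝ)) • ∑ r, ∑ s, f b r s • (x r * x s)) := by
    intro b
    rw [hγ]
    exact cliff_Gg f x hxx' hf12 hf23 hcyc hjac b
  have hγx : ∀ b, γ * γ * x b = x b * (γ * γ) := by
    intro b
    have h1 : γ * x b = ((-(1/2:ℝ)) • ∑ r, ∑ s, f b r s • (x r * x s)) - x b * γ := by
      rw [← hA b]; abel
    have h2 : γ * (γ * x b) = γ * ((-(1/2:ℝ)) • ∑ r, ∑ s, f b r s • (x r * x s))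
        - (((-(1/2:ℝ)) • ∑ r, ∑ s, f b r s • (x r * x s)) - x b * γ) * γ := by
      rw [h1, mul_sub, ← mul_assoc, h1]
    rw [mul_assoc, h2, ← hB b]
    noncomm_ring
  -- γ² is central in the Clifford algebra
  have hγcen : ∀ y : CliffordAlgebra Q, γ * γ * y = y * (γ * γ) := by
    intro y
    induction y using CliffordAlgebra.induction with
    | algebraMap r => exact (Algebra.commutes r _).symm.trans rfl
    | ι v =>
        have hv : CliffordAlgebra.ι Q v = ∑ i, e.repr v i • x i := by
          conv_lhs => rw [← e.sum_repr v]
          rw [map_sum]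
          simp only [map_smul, hx]
        rw [hv, Finset.mul_sum, Finset.sum_mul]
        exact Finset.sum_congr rfl fun i _ => by
          rw [mul_smul_comm, smul_mul_assoc, hγx i]
    | mul a b ha hb => rw [← mul_assoc, ha, mul_assoc, hb, ← mul_assoc]
    | add a b ha hb => rw [mul_add, add_mul, ha, hb]
  -- the Casimir is central in the enveloping algebra
  have hCasx := casimir_comm f u huu hf13
  have hCasCen : ∀ y : UniversalEnvelopingAlgebra ℝ g,
      (∑ a, u a * u a) * y = y * ∑ a, u a * u a := by
    intro y
    induction y using uea_induction with
    | halg r => exact (Algebra.commutes r _).symm.trans rfl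
    | hι v =>
        have hv : UniversalEnvelopingAlgebra.ι ℝ v = ∑ i, e.repr v i • u i := by
          conv_lhs => rw [← e.sum_repr v]
          rw [← LieHom.coe_toLinearMap, map_sum]
          simp only [map_smul, LieHom.coe_toLinearMap, ← hu]
        rw [hv, Finset.mul_sum, Finset.sum_mul]
        exact Finset.sum_congr rfl fun i _ => by
          rw [mul_smul_comm, smul_mul_assoc, hCasx i]
    | hmul a b ha hb => rw [← mul_assoc, ha, mul_assoc, hb, ← mul_assoc]
    | hadd a b ha hb => rw [mul_add, add_mul, ha, hb]
  -- the square of the Dirac element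
  have hD2 : D * D = ((1/2:ℝ) • ∑ a, u a * u a) ⊗ₜ[ℝ] (1 : CliffordAlgebra Q)
      + (1 : UniversalEnvelopingAlgebra ℝ g) ⊗ₜ[ℝ] (γ * γ) := by
    rw [hD, hγ]
    exact dirac_square_eq f u x _ huu hxx' hcyc (by
      intro a
      have := hA a
      rw [hγ] at this
      exact this)
  -- conclusion
  intro w
  induction w using TensorProduct.induction_on with
  | zero => rw [mul_zero, zero_mul]
  | tmul p q =>
      rw [hD2, add_mul, mul_add, Algebra.TensorProduct.tmul_mul_tmul,
        Algebra.TensorProduct.tmul_mul_tmul, Algebra.TensorProduct.tmul_mul_tmul,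
        Algebra.TensorProduct.tmul_mul_tmul, one_mul, mul_one, one_mul, mul_one]
      rw [show ((1/2:ℝ) • ∑ a, u a * u a) * p = p * ((1/2:ℝ) • ∑ a, u a * u a) by
        rw [smul_mul_assoc, mul_smul_comm, hCasCen p], hγcen q]
  | add w1 w2 h1 h2 => rw [mul_add, h1, h2, add_mul]
end

section
/- For every w ∈ Cl(𝔤): σ(γ·w − ε(w)·γ) = −½ Σ_{a,b,c} f_{abc} e_b ∧ e_c ∧ ι_a(σ(w)) − (1/24) Σ_{a,b,c} f_{abc} (ι_a ι_b ι_c)(σ(w)). That is, under the symbol map the super-commutator with γ becomes the Koszul-type operator −½ f_{abc} y_b y_c ι_a − (1/24) f_{abc} ι_a ι_b ι_c on the exterior algebra. -/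
private def lprod {n : ℕ} {A : Type*} [Monoid A] (x : Fin n → A) (l : List (Fin n)) : A :=
  (l.map x).prod

private lemma lprod_nil {n : ℕ} {A : Type*} [Monoid A] (x : Fin n → A) : lprod x [] = 1 := rfl

private lemma lprod_cons {n : ℕ} {A : Type*} [Monoid A] (x : Fin n → A) (a : Fin n)
    (l : List (Fin n)) : lprod x (a :: l) = x a * lprod x l := by
  simp [lprod]

private lemma sorted_erase {n : ℕ} {l : List (Fin n)} (hl : l.Pairwise (· < ·)) (a : Fin n) :
    (l.erase a).Pairwise (· < ·) :=
  List.Pairwise.erase a hl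

private lemma oi_cons_of_lt {n : ℕ} {a : Fin n} {l : List (Fin n)}
    (h : ∀ b ∈ l, a < b) : List.orderedInsert (· ≤ ·) a l = a :: l := by
  cases l with
  | nil => rfl
  | cons b t => simp [List.orderedInsert, le_of_lt (h b ((List.mem_cons_self (a := b) (l := t))))]

private lemma sorted_oi {n : ℕ} {a : Fin n} {l : List (Fin n)}
    (hl : l.Pairwise (· < ·)) (ha : a ∉ l) :
    (List.orderedInsert (· ≤ ·) a l).Pairwise (· < ·) := by
  induction l with
  | nil => simp
  | cons h t ih =>
    obtain ⟨hht, ht⟩ := List.pairwise_cons.mp hl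
    by_cases hah : a ≤ h
    · have hlt : a < h := lt_of_le_of_ne hah (fun he => ha (he ▸ (List.mem_cons_self (a := h) (l := t))))
      rw [List.orderedInsert, if_pos hah]
      refine List.pairwise_cons.mpr ⟨?_, hl⟩
      intro b hb
      rcases List.mem_cons.mp hb with rfl | hb
      · exact hlt
      · exact lt_trans hlt (hht b hb)
    · rw [List.orderedInsert, if_neg hah]
      refine List.pairwise_cons.mpr ⟨?_, ih ht (fun hat => ha (List.mem_cons_of_mem h hat))⟩
      intro b hb
      rcases (List.mem_orderedInsert (· ≤ ·)).mp hb with rfl | hb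
      · exact lt_of_not_ge hah
      · exact hht b hb

private lemma count_zero_of_sorted {n : ℕ} {h a : Fin n} {t : List (Fin n)}
    (hht : ∀ b ∈ t, h < b) (hah : a ≤ h) :
    ((h :: t).countP fun b => decide (b < a)) = 0 := by
  rw [List.countP_eq_zero]
  intro b hb
  rcases List.mem_cons.mp hb with rfl | hb
  · simpa using not_lt_of_ge hah
  · simpa using not_lt_of_ge (le_of_lt (lt_of_le_of_lt hah (hht b hb)))

private lemma gen_left {n : ℕ} {A : Type*} [Ring A] [Algebra ℝ A] (x : Fin n → A) (κ : ℝ)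
    (hsq : ∀ (a : Fin n) (v : A), x a * (x a * v) = κ • v)
    (hcomm : ∀ a b : Fin n, a ≠ b → x a * x b = -(x b * x a)) :
    ∀ l : List (Fin n), l.Pairwise (· < ·) → ∀ a : Fin n,
      (a ∈ l → x a * lprod x l
        = (((-1 : ℝ) ^ (l.countP fun b => decide (b < a))) * κ) • lprod x (l.erase a)) ∧
      (a ∉ l → x a * lprod x l
        = ((-1 : ℝ) ^ (l.countP fun b => decide (b < a))) • lprod x (List.orderedInsert (· ≤ ·) a l)) := by
  intro l
  induction l with
  | nil =>
    intro _ a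
    refine ⟨fun h => absurd h (List.not_mem_nil), fun _ => ?_⟩
    simp [lprod]
  | cons h t ih =>
    intro hl a
    obtain ⟨hht, ht⟩ := List.pairwise_cons.mp hl
    have hxh : x a * lprod x (h :: t) = x a * (x h * lprod x t) := by rw [lprod_cons]
    rcases lt_trichotomy a h with hah | rfl | hah
    · -- a < h : not a member
      have hnm : a ∉ h :: t := by
        intro hm
        rcases List.mem_cons.mp hm with rfl | hm
        · exact lt_irrefl a hah
        · exact lt_irrefl a (lt_trans hah (hht a hm))
      refine ⟨fun hm => absurd hm hnm, fun _ => ?_⟩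
      rw [count_zero_of_sorted hht (le_of_lt hah), oi_cons_of_lt (l := h :: t)
        (by intro b hb; rcases List.mem_cons.mp hb with rfl | hb; exact hah;
            exact lt_trans hah (hht b hb))]
      rw [pow_zero, one_smul, lprod_cons, lprod_cons, lprod_cons]
    · -- a = h
      have hnt : a ∉ t := fun hm => lt_irrefl a (hht a hm)
      constructor
      · intro _
        rw [hxh, hsq, count_zero_of_sorted hht le_rfl, List.erase_cons_head, pow_zero, one_mul]
      · intro hnm
        exact absurd ((List.mem_cons_self (a := a) (l := t))) hnm
    · -- h < a
      have hne : a ≠ h := ne_of_gt hah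
      have hcnt : ((h :: t).countP fun b => decide (b < a))
          = (t.countP fun b => decide (b < a)) + 1 := by
        rw [List.countP_cons, if_pos (by simpa using hah)]
      have hswap : x a * (x h * lprod x t) = -(x h * (x a * lprod x t)) := by
        rw [← mul_assoc, hcomm a h hne, neg_mul, mul_assoc]
      constructor
      · intro hm
        have hmt : a ∈ t := by
          rcases List.mem_cons.mp hm with rfl | hm
          · exact absurd rfl hne
          · exact hm
        rw [hxh, hswap, (ih ht a).1 hmt, hcnt,
          List.erase_cons_tail (by simpa using hne.symm), lprod_cons]
        rw [mul_smul_comm, ← neg_smul, pow_succ]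
        ring_nf
      · intro hnm
        have hnt : a ∉ t := fun hm => hnm (List.mem_cons_of_mem h hm)
        rw [hxh, hswap, (ih ht a).2 hnt, hcnt]
        rw [show List.orderedInsert (· ≤ ·) a (h :: t)
            = h :: List.orderedInsert (· ≤ ·) a t by
          rw [List.orderedInsert, if_neg (not_le_of_gt hah)], lprod_cons]
        rw [mul_smul_comm, ← neg_smul, pow_succ]
        ring_nf

private lemma gen_right {n : ℕ} {A : Type*} [Ring A] [Algebra ℝ A] (x : Fin n → A) (κ : ℝ)
    (hsq : ∀ (a : Fin n) (v : A), x a * (x a * v) = κ • v)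
    (hcomm : ∀ a b : Fin n, a ≠ b → x a * x b = -(x b * x a)) :
    ∀ l : List (Fin n), l.Pairwise (· < ·) → ∀ a : Fin n,
      (a ∈ l → lprod x l * x a
        = (((-1 : ℝ) ^ (l.countP fun b => decide (a < b))) * κ) • lprod x (l.erase a)) ∧
      (a ∉ l → lprod x l * x a
        = ((-1 : ℝ) ^ (l.countP fun b => decide (a < b))) • lprod x (List.orderedInsert (· ≤ ·) a l)) := by
  intro l
  induction l with
  | nil =>
    intro _ a
    refine ⟨fun h => absurd h (List.not_mem_nil), fun _ => ?_⟩
    simp [lprod]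
  | cons h t ih =>
    intro hl a
    obtain ⟨hht, ht⟩ := List.pairwise_cons.mp hl
    have hxh : lprod x (h :: t) * x a = x h * (lprod x t * x a) := by
      rw [lprod_cons, mul_assoc]
    by_cases hmt : a ∈ t
    · -- a ∈ t, so h < a
      have hha : h < a := hht a hmt
      have hcnt : ((h :: t).countP fun b => decide (a < b))
          = (t.countP fun b => decide (a < b)) := by
        rw [List.countP_cons, if_neg (by simpa using not_lt_of_gt hha), add_zero]
      constructor
      · intro _
        rw [hxh, (ih ht a).1 hmt, hcnt, mul_smul_comm,
          List.erase_cons_tail (by simpa using (ne_of_gt hha).symm ), lprod_cons]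
      · intro hnm
        exact absurd (List.mem_cons_of_mem h hmt) hnm
    · -- a ∉ t
      have hk' : (t.countP fun b => decide (a < b)) = t.length → True := fun _ => trivial
      rcases lt_trichotomy a h with hah | rfl | hah
      · -- a < h, not a member
        have hnm : a ∉ h :: t := by
          intro hm
          rcases List.mem_cons.mp hm with rfl | hm
          · exact lt_irrefl a hah
          · exact hmt hm
        refine ⟨fun hm => absurd hm hnm, fun _ => ?_⟩
        have hcall : ∀ b ∈ t, a < b := fun b hb => lt_trans hah (hht b hb)
        have hcnt' : (t.countP fun b => decide (a < b)) = t.length := by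
          rw [List.countP_eq_length]
          intro b hb; simpa using hcall b hb
        rw [hxh, (ih ht a).2 hmt, hcnt', oi_cons_of_lt hcall, lprod_cons, mul_smul_comm,
          ← mul_assoc, hcomm h a (ne_of_gt hah), neg_mul, mul_assoc, ← lprod_cons, ← lprod_cons]
        have hcnt2 : ((h :: t).countP fun b => decide (a < b)) = t.length + 1 := by
          rw [List.countP_cons, if_pos (by simpa using hah), hcnt']
        rw [hcnt2, oi_cons_of_lt (l := h :: t)
          (by intro b hb; rcases List.mem_cons.mp hb with rfl | hb; exact hah; exact hcall b hb)]
        rw [pow_succ, smul_neg, ← neg_smul]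
        ring_nf
      · -- a = h
        constructor
        · intro _
          have hcall : ∀ b ∈ t, a < b := hht
          have hcnt' : (t.countP fun b => decide (a < b)) = t.length := by
            rw [List.countP_eq_length]
            intro b hb; simpa using hcall b hb
          rw [hxh, (ih ht a).2 hmt, hcnt', oi_cons_of_lt hcall, lprod_cons, mul_smul_comm, hsq,
            smul_smul, List.erase_cons_head]
          have hcnt2 : ((a :: t).countP fun b => decide (a < b)) = t.length := by
            rw [List.countP_cons, if_neg (by simp), add_zero, hcnt']
          rw [hcnt2]
        · intro hnm
          exact absurd ((List.mem_cons_self (a := a) (l := t))) hnm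
      · -- h < a
        have hnm : a ∉ h :: t := by
          intro hm
          rcases List.mem_cons.mp hm with rfl | hm
          · exact lt_irrefl a hah
          · exact hmt hm
        refine ⟨fun hm => absurd hm hnm, fun _ => ?_⟩
        have hcnt : ((h :: t).countP fun b => decide (a < b))
            = (t.countP fun b => decide (a < b)) := by
          rw [List.countP_cons, if_neg (by simpa using not_lt_of_gt hah)]
          exact add_zero _
        rw [hxh, (ih ht a).2 hmt, hcnt, mul_smul_comm, ← lprod_cons,
          show h :: List.orderedInsert (· ≤ ·) a t = List.orderedInsert (· ≤ ·) a (h :: t) by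
            rw [List.orderedInsert, if_neg (not_le_of_gt hah)]]

private lemma count_not_mem {n : ℕ} {a : Fin n} :
    ∀ {l : List (Fin n)}, a ∉ l →
      (l.countP fun b => decide (b < a)) + (l.countP fun b => decide (a < b)) = l.length := by
  intro l
  induction l with
  | nil => intro _; rfl
  | cons h t ih =>
    intro hnm
    have hne : h ≠ a := fun he => hnm (he ▸ (List.mem_cons_self (a := h) (l := t)))
    have iht := ih (fun hm => hnm (List.mem_cons_of_mem h hm))
    rw [List.countP_cons, List.countP_cons, List.length_cons]
    rcases lt_or_gt_of_ne hne with hlt | hgt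
    · rw [if_pos (by simpa using hlt), if_neg (by simpa using not_lt_of_gt hlt)]
      omega
    · rw [if_neg (by simpa using not_lt_of_gt hgt), if_pos (by simpa using hgt)]
      omega

private lemma count_mem {n : ℕ} {a : Fin n} :
    ∀ {l : List (Fin n)}, l.Pairwise (· < ·) → a ∈ l →
      (l.countP fun b => decide (b < a)) + (l.countP fun b => decide (a < b)) + 1 = l.length := by
  intro l
  induction l with
  | nil => intro _ hm; exact absurd hm (List.not_mem_nil)
  | cons h t ih =>
    intro hl hm
    obtain ⟨hht, ht⟩ := List.pairwise_cons.mp hl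
    rw [List.countP_cons, List.countP_cons, List.length_cons]
    rcases List.mem_cons.mp hm with rfl | hmt
    · have h1 : (t.countP fun b => decide (b < a)) = 0 := by
        rw [List.countP_eq_zero]; intro b hb; simpa using not_lt_of_gt (hht b hb)
      have h2 : (t.countP fun b => decide (a < b)) = t.length := by
        rw [List.countP_eq_length]; intro b hb; simpa using hht b hb
      rw [h1, h2]
      simp
    · have hha : h < a := hht a hmt
      have iht := ih ht hmt
      rw [if_pos (by simpa using hha), if_neg (by simpa using not_lt_of_gt hha)]
      omega

private lemma sum3_zero {n : ℕ} {E : Type*} [AddCommMonoid E] (G : Fin n → Fin n → Fin n → E)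
    (h : ∀ a b c, G a b c = 0) : (∑ a, ∑ b, ∑ c, G a b c) = 0 :=
  Finset.sum_eq_zero fun a _ => Finset.sum_eq_zero fun b _ => Finset.sum_eq_zero fun c _ => h a b c

private lemma sum3_swap12 {n : ℕ} {E : Type*} [AddCommMonoid E] (G : Fin n → Fin n → Fin n → E) :
    (∑ a, ∑ b, ∑ c, G a b c) = ∑ a, ∑ b, ∑ c, G b a c := Finset.sum_comm

private lemma sum3_swap23 {n : ℕ} {E : Type*} [AddCommMonoid E] (G : Fin n → Fin n → Fin n → E) :
    (∑ a, ∑ b, ∑ c, G a b c) = ∑ a, ∑ b, ∑ c, G a c b :=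
  Finset.sum_congr rfl fun _ _ => Finset.sum_comm

private lemma sum3_cycR {n : ℕ} {E : Type*} [AddCommMonoid E] (G : Fin n → Fin n → Fin n → E) :
    (∑ a, ∑ b, ∑ c, G a b c) = ∑ a, ∑ b, ∑ c, G c a b :=
  calc (∑ a, ∑ b, ∑ c, G a b c) = ∑ b, ∑ a, ∑ c, G a b c := Finset.sum_comm
    _ = ∑ b, ∑ c, ∑ a, G a b c := Finset.sum_congr rfl fun _ _ => Finset.sum_comm

private lemma sum3_cycL {n : ℕ} {E : Type*} [AddCommMonoid E] (G : Fin n → Fin n → Fin n → E) :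
    (∑ a, ∑ b, ∑ c, G a b c) = ∑ a, ∑ b, ∑ c, G b c a :=
  (sum3_cycR G).trans (sum3_cycR _)

private lemma sum3_swap13 {n : ℕ} {E : Type*} [AddCommMonoid E] (G : Fin n → Fin n → Fin n → E) :
    (∑ a, ∑ b, ∑ c, G a b c) = ∑ a, ∑ b, ∑ c, G c b a :=
  (sum3_swap12 G).trans (sum3_cycL _)

private lemma invol_lprod {n : ℕ} {g : Type*} [AddCommGroup g] [Module ℝ g]
    {Q : QuadraticForm ℝ g}
    (y : Fin n → CliffordAlgebra Q) (hy : ∀ a, CliffordAlgebra.involute (y a) = -(y a)) :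
    ∀ l : List (Fin n),
      CliffordAlgebra.involute (lprod y l) = ((-1:ℝ) ^ l.length) • lprod y l := by
  intro l
  induction l with
  | nil => simp [lprod_nil]
  | cons h t ih =>
    rw [lprod_cons, map_mul, hy, ih, List.length_cons, pow_succ]
    simp only [neg_mul, mul_smul_comm]
    module

private lemma sum3_smul_out {n : ℕ} {E : Type*} [AddCommGroup E] [Module ℝ E]
    (F : Fin n → Fin n → Fin n → ℝ) (r : ℝ) (X : Fin n → Fin n → Fin n → E) :
    (∑ a, ∑ b, ∑ c, (F a b c * r) • X a b c) = r • ∑ a, ∑ b, ∑ c, F a b c • X a b c := by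
  rw [Finset.smul_sum]
  refine Finset.sum_congr rfl fun a _ => ?_
  rw [Finset.smul_sum]
  refine Finset.sum_congr rfl fun b _ => ?_
  rw [Finset.smul_sum]
  refine Finset.sum_congr rfl fun c _ => ?_
  rw [smul_smul, mul_comm]

set_option maxHeartbeats 4000000 in
/-- Under the symbol map, the super-commutator with `γ` becomes the
Koszul-type operator `−½ f_{abc} y_b y_c ι_a − (1/24) f_{abc} ι_a ι_b ι_c` on `∧𝔤`:
for all `w ∈ Cl(𝔤)`, `σ(γ·w − ε(w)·γ) = −½ ∑ f_{abc} e_b ∧ e_c ∧ ι_a(σ w)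
− (1/24) ∑ f_{abc} (ι_a ι_b ι_c)(σ w)`. -/
theorem symbol_of_ad_gamma
    {n : ℕ} {g : Type*} [LieRing g] [LieAlgebra ℝ g]
    -- the ad-invariant inner product, as a symmetric bilinear form
    (ip : LinearMap.BilinForm ℝ g)
    (ip_symm : ∀ v w : g, ip v w = ip w v)
    (ip_inv : ∀ v w z : g, ip ⁅v, w⁆ z + ip w ⁅v, z⁆ = 0)
    -- an orthonormal basis
    (e : Module.Basis (Fin n) ℝ g)
    (he : ∀ a b, ip (e a) (e b) = if a = b then (1 : ℝ) else 0)
    -- the quadratic form Q(v) = ½⟨v,v⟩ and its Clifford algebra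
    (Q : QuadraticForm ℝ g)
    (hQ : ∀ v, Q v = (1 / 2 : ℝ) * ip v v)
    -- structure constants
    (f : Fin n → Fin n → Fin n → ℝ)
    (hf : ∀ a b c, f a b c = ip ⁅e a, e b⁆ (e c))
    -- the Clifford generators
    (x : Fin n → CliffordAlgebra Q)
    (hx : ∀ a, x a = CliffordAlgebra.ι Q (e a))
    -- contraction operators ι_a on the exterior algebra ∧𝔤: the odd derivations
    -- determined by ι_a(e_b) = δ_{ab}
    (ic : Fin n → Module.End ℝ (ExteriorAlgebra ℝ g))
    (hic_gen : ∀ a b, ic a (ExteriorAlgebra.ι ℝ (e b))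
      = algebraMap ℝ (ExteriorAlgebra ℝ g) (if a = b then 1 else 0))
    (hic_der : ∀ a (u v : ExteriorAlgebra ℝ g),
      ic a (u * v) = ic a u * v + CliffordAlgebra.involute u * ic a v)
    -- the symbol map σ : Cl(𝔤) → ∧𝔤, determined by
    -- σ(x_{j₁}⋯x_{j_k}) = e_{j₁}∧⋯∧e_{j_k} for j₁ < ⋯ < j_k (k = 0 gives σ(1) = 1)
    (σ : CliffordAlgebra Q ≃ₗ[ℝ] ExteriorAlgebra ℝ g)
    (hσ : ∀ l : List (Fin n), l.Pairwise (· < ·) →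
      σ (l.map x).prod = (l.map fun a => ExteriorAlgebra.ι ℝ (e a)).prod)
    -- the element γ
    (γ : CliffordAlgebra Q)
    (hγ : γ = (-(1 / 6 : ℝ)) • ∑ a, ∑ b, ∑ c, f a b c • (x a * x b * x c)) :
    ∀ w : CliffordAlgebra Q,
      σ (γ * w - CliffordAlgebra.involute w * γ)
        = (-(1 / 2 : ℝ)) • ∑ a, ∑ b, ∑ c, f a b c •
            (ExteriorAlgebra.ι ℝ (e b) * (ExteriorAlgebra.ι ℝ (e c) * ic a (σ w)))
          - (1 / 24 : ℝ) • ∑ a, ∑ b, ∑ c, f a b c • ic a (ic b (ic c (σ w))) := by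
  classical
  -- the quadratic form on basis vectors
  have hQe : ∀ a, Q (e a) = (1/2 : ℝ) := by
    intro a; rw [hQ, he, if_pos rfl, mul_one]
  have hpolar : ∀ a b, QuadraticMap.polar (⇑Q) (e a) (e b) = if a = b then (1:ℝ) else 0 := by
    intro a b
    by_cases hab : a = b
    · subst hab
      simp only [QuadraticMap.polar, hQ, map_add, LinearMap.add_apply, he, if_pos rfl]
      norm_num
    · simp only [QuadraticMap.polar, hQ, map_add, LinearMap.add_apply, he, if_neg hab,
        if_neg (Ne.symm hab)]
      norm_num
  have hxsq' : ∀ (a : Fin n) (v : CliffordAlgebra Q), x a * (x a * v) = (1/2 : ℝ) • v := by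
    intro a v
    rw [hx, ← mul_assoc, CliffordAlgebra.ι_sq_scalar, hQe, ← Algebra.smul_def]
  have hxcomm : ∀ a b : Fin n, a ≠ b → x a * x b = -(x b * x a) := by
    intro a b hab
    rw [hx, hx, CliffordAlgebra.ι_mul_ι_comm, hpolar, if_neg hab, map_zero, zero_sub]
  have hysq' : ∀ (a : Fin n) (v : ExteriorAlgebra ℝ g),
      ExteriorAlgebra.ι ℝ (e a) * (ExteriorAlgebra.ι ℝ (e a) * v) = (0 : ℝ) • v := by
    intro a v
    rw [← mul_assoc, ExteriorAlgebra.ι_sq_zero, zero_mul, zero_smul]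
  have hycomm : ∀ a b : Fin n, a ≠ b → ExteriorAlgebra.ι ℝ (e a) * ExteriorAlgebra.ι ℝ (e b)
      = -(ExteriorAlgebra.ι ℝ (e b) * ExteriorAlgebra.ι ℝ (e a)) := by
    intro a b _
    exact eq_neg_of_add_eq_zero_left (ExteriorAlgebra.ι_add_mul_swap _ _)
  -- antisymmetry of the structure constants
  have hf1 : ∀ a b c, f b a c = -f a b c := by
    intro a b c
    rw [hf, hf, ← lie_skew (e a) (e b), map_neg, LinearMap.neg_apply, neg_neg]
  have hf2 : ∀ a b c, f a c b = -f a b c := by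
    intro a b c
    rw [hf, hf, ip_symm]
    have := ip_inv (e a) (e b) (e c)
    linarith
  have hf_cyc : ∀ a b c, f c a b = f a b c := by
    intro a b c
    rw [show f c a b = -f a c b from hf1 a c b, hf2, neg_neg]
  have hfe1 : ∀ a c, f a a c = 0 := by
    intro a c; have := hf1 a a c; linarith
  have hfe2 : ∀ a b, f a b b = 0 := by
    intro a b; have := hf2 a b b; linarith
  have hfe3 : ∀ a b, f a b a = 0 := by
    intro a b; have h := hf2 a a b; have := hfe1 a b; linarith
  -- basic properties of the contraction operators
  have ic_one : ∀ a, ic a (1 : ExteriorAlgebra ℝ g) = 0 := by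
    intro a
    have h := hic_der a 1 1
    simp only [one_mul, mul_one, map_one] at h
    exact (left_eq_add.mp h)
  have ic_scalar : ∀ a (r : ℝ), ic a (algebraMap ℝ (ExteriorAlgebra ℝ g) r) = 0 := by
    intro a r
    rw [Algebra.algebraMap_eq_smul_one, map_smul, ic_one, smul_zero]
  have hinvy : ∀ a : Fin n, CliffordAlgebra.involute (ExteriorAlgebra.ι ℝ (e a))
      = -(ExteriorAlgebra.ι ℝ (e a)) := fun a => CliffordAlgebra.involute_ι _
  have ic_mul_EI : ∀ (a b : Fin n) (v : ExteriorAlgebra ℝ g),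
      ic a (ExteriorAlgebra.ι ℝ (e b) * v)
        = (if a = b then (1:ℝ) else 0) • v - ExteriorAlgebra.ι ℝ (e b) * ic a v := by
    intro a b v
    rw [hic_der, hic_gen, ← Algebra.smul_def, hinvy, neg_mul, ← sub_eq_add_neg]
  have ic_vec : ∀ (a : Fin n) (v : g),
      ic a (ExteriorAlgebra.ι ℝ v) = algebraMap ℝ (ExteriorAlgebra ℝ g) (e.repr v a) := by
    intro a v
    conv_lhs => rw [← Module.Basis.sum_repr e v]
    rw [map_sum, map_sum]
    have hterm : ∀ b ∈ Finset.univ, ic a (ExteriorAlgebra.ι ℝ ((e.repr v b) • e b))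
        = if a = b then algebraMap ℝ (ExteriorAlgebra ℝ g) (e.repr v b) else 0 := by
      intro b _
      rw [map_smul, map_smul, hic_gen]
      by_cases hab : a = b
      · rw [if_pos hab, if_pos hab, map_one, Algebra.algebraMap_eq_smul_one]
      · rw [if_neg hab, if_neg hab, map_zero, smul_zero]
    rw [Finset.sum_congr rfl hterm, Finset.sum_ite_eq]
    simp
  have invol_ic : ∀ (a : Fin n) (v : ExteriorAlgebra ℝ g),
      CliffordAlgebra.involute (ic a v) = -(ic a (CliffordAlgebra.involute v)) := by
    intro a v
    induction v using ExteriorAlgebra.induction with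
    | algebraMap r =>
      rw [ic_scalar, map_zero, show CliffordAlgebra.involute ((algebraMap ℝ _) r)
        = algebraMap ℝ (ExteriorAlgebra ℝ g) r from AlgHom.commutes _ r, ic_scalar, neg_zero]
    | ι v =>
      rw [ic_vec, show CliffordAlgebra.involute ((algebraMap ℝ _) (e.repr v a))
          = algebraMap ℝ (ExteriorAlgebra ℝ g) (e.repr v a) from AlgHom.commutes _ _,
        show CliffordAlgebra.involute (ExteriorAlgebra.ι ℝ v) = -(ExteriorAlgebra.ι ℝ v) from
          CliffordAlgebra.involute_ι _, map_neg, ic_vec, neg_neg]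
    | mul u v ihu ihv =>
      rw [hic_der, map_add, map_mul, map_mul, ihu, ihv, map_mul, hic_der,
        CliffordAlgebra.involute_involute]
      simp only [neg_mul, mul_neg, neg_add_rev]
      abel
    | add u v ihu ihv =>
      rw [map_add, map_add, ihu, ihv, map_add, map_add, neg_add]
  have IC0 : ∀ (a : Fin n) (l : List (Fin n)), a ∉ l →
      ic a (lprod (fun b => ExteriorAlgebra.ι ℝ (e b)) l) = 0 := by
    intro a l
    induction l with
    | nil => intro _; exact ic_one a
    | cons h t ih =>
      intro hnm
      have hne : a ≠ h := fun he => hnm (he ▸ (List.mem_cons_self (a := h) (l := t)))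
      rw [lprod_cons, ic_mul_EI, if_neg hne, zero_smul, ih (fun hm => hnm (List.mem_cons_of_mem h hm)),
        mul_zero, sub_zero]
  have IC_mem : ∀ (l : List (Fin n)), l.Pairwise (· < ·) → ∀ a ∈ l,
      ic a (lprod (fun b => ExteriorAlgebra.ι ℝ (e b)) l)
        = ((-1:ℝ) ^ (l.countP fun b => decide (b < a))) •
            lprod (fun b => ExteriorAlgebra.ι ℝ (e b)) (l.erase a) := by
    intro l
    induction l with
    | nil => intro _ a ha; exact absurd ha (List.not_mem_nil)
    | cons h t ih =>
      intro hl a ha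
      obtain ⟨hht, ht⟩ := List.pairwise_cons.mp hl
      rw [lprod_cons, ic_mul_EI]
      rcases List.mem_cons.mp ha with rfl | hmt
      · have hnt : a ∉ t := fun hm => lt_irrefl a (hht a hm)
        rw [if_pos rfl, IC0 a t hnt, mul_zero, sub_zero, one_smul, List.erase_cons_head,
          count_zero_of_sorted hht le_rfl, pow_zero, one_smul]
      · have hha : h < a := hht a hmt
        have hne : a ≠ h := ne_of_gt hha
        rw [if_neg hne, zero_smul, zero_sub, ih ht a hmt,
          List.erase_cons_tail (by simpa using hne.symm), lprod_cons,
          List.countP_cons, if_pos (by simpa using hha), pow_succ, mul_smul_comm, ← neg_smul]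
        ring_nf
  -- restatement of the symbol map on sorted monomials
  have hs' : ∀ l : List (Fin n), l.Pairwise (· < ·) →
      σ (lprod x l) = lprod (fun b => ExteriorAlgebra.ι ℝ (e b)) l := fun l hl => hσ l hl
  have hinvx : ∀ a : Fin n, CliffordAlgebra.involute (x a) = -(x a) := by
    intro a; rw [hx]; exact CliffordAlgebra.involute_ι _
  -- spanning of the Clifford algebra by sorted monomials
  have hspan : ∀ v : CliffordAlgebra Q,
      v ∈ Submodule.span ℝ {m : CliffordAlgebra Q |
        ∃ l : List (Fin n), l.Pairwise (· < ·) ∧ lprod x l = m} := by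
    set S : Set (CliffordAlgebra Q) :=
      {m | ∃ l : List (Fin n), l.Pairwise (· < ·) ∧ lprod x l = m} with hS
    have hmem : ∀ l : List (Fin n), l.Pairwise (· < ·) → lprod x l ∈ Submodule.span ℝ S :=
      fun l hl => Submodule.subset_span ⟨l, hl, rfl⟩
    have hxb : ∀ b : Fin n, x b ∈ Submodule.span ℝ S := fun b => by
      have := hmem [b] (List.pairwise_singleton _ b)
      simpa [lprod] using this
    have hmul : ∀ (a : Fin n) (v : CliffordAlgebra Q), v ∈ Submodule.span ℝ S →
        x a * v ∈ Submodule.span ℝ S := by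
      intro a v hv
      induction hv using Submodule.span_induction with
      | mem z hz =>
        obtain ⟨l, hl, rfl⟩ := hz
        by_cases hm : a ∈ l
        · rw [(gen_left x (1/2:ℝ) hxsq' hxcomm l hl a).1 hm]
          exact Submodule.smul_mem _ _ (hmem _ (sorted_erase hl a))
        · rw [(gen_left x (1/2:ℝ) hxsq' hxcomm l hl a).2 hm]
          exact Submodule.smul_mem _ _ (hmem _ (sorted_oi hl hm))
      | zero => rw [mul_zero]; exact Submodule.zero_mem _
      | add z1 z2 h1 h2 ih1 ih2 => rw [mul_add]; exact Submodule.add_mem _ ih1 ih2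
      | smul r z hz ih => rw [mul_smul_comm]; exact Submodule.smul_mem _ _ ih
    have hvx : ∀ v : g, CliffordAlgebra.ι Q v = ∑ b, e.repr v b • x b := by
      intro v
      conv_lhs => rw [← Module.Basis.sum_repr e v]
      rw [map_sum]
      exact Finset.sum_congr rfl fun b _ => by rw [map_smul, hx]
    intro v
    induction v using CliffordAlgebra.induction with
    | algebraMap r =>
      rw [Algebra.algebraMap_eq_smul_one]
      exact Submodule.smul_mem _ _ (hmem [] List.Pairwise.nil)
    | ι v =>
      rw [hvx]
      exact Submodule.sum_mem _ fun b _ => Submodule.smul_mem _ _ (hxb b)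
    | mul v1 v2 ih1 ih2 =>
      have hmono : ∀ (l : List (Fin n)), l.Pairwise (· < ·) → ∀ m ∈ Submodule.span ℝ S,
          lprod x l * m ∈ Submodule.span ℝ S := by
        intro l
        induction l with
        | nil => intro _ m hm; rw [lprod_nil, one_mul]; exact hm
        | cons hh tt iht =>
          intro hl m hm
          rw [lprod_cons, mul_assoc]
          exact hmul hh _ (iht (List.pairwise_cons.mp hl).2 m hm)
      have key : ∀ u : CliffordAlgebra Q, u ∈ Submodule.span ℝ S →
          ∀ m ∈ Submodule.span ℝ S, u * m ∈ Submodule.span ℝ S := by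
        intro u hu
        induction hu using Submodule.span_induction with
        | mem z hz =>
          obtain ⟨l, hl, rfl⟩ := hz
          exact hmono l hl
        | zero => intro m hm; rw [zero_mul]; exact Submodule.zero_mem _
        | add z1 z2 h1 h2 ihz1 ihz2 =>
          intro m hm; rw [add_mul]; exact Submodule.add_mem _ (ihz1 m hm) (ihz2 m hm)
        | smul r z hz ihz =>
          intro m hm; rw [smul_mul_assoc]; exact Submodule.smul_mem _ _ (ihz m hm)
      exact key v1 ih1 v2 ih2
    | add v1 v2 ih1 ih2 => exact Submodule.add_mem _ ih1 ih2
  -- σ commutes with the parity involution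
  have INV : ∀ v : CliffordAlgebra Q,
      σ (CliffordAlgebra.involute v) = CliffordAlgebra.involute (σ v) := by
    intro v
    induction hspan v using Submodule.span_induction with
    | mem z hz =>
      obtain ⟨l, hl, rfl⟩ := hz
      rw [invol_lprod x hinvx l, map_smul, hs' l hl,
        invol_lprod (fun b => ExteriorAlgebra.ι ℝ (e b)) hinvy l]
    | zero => rw [map_zero, map_zero, map_zero]
    | add z1 z2 h1 h2 ih1 ih2 => simp only [map_add, ih1, ih2]
    | smul r z hz ih => simp only [map_smul, ih]
  -- the key multiplication formulas
  have P1 : ∀ (a : Fin n) (v : CliffordAlgebra Q),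
      σ (x a * v) = ExteriorAlgebra.ι ℝ (e a) * σ v + (1/2:ℝ) • ic a (σ v) := by
    intro a v
    induction hspan v using Submodule.span_induction with
    | mem z hz =>
      obtain ⟨l, hl, rfl⟩ := hz
      have hgl := gen_left x (1/2:ℝ) hxsq' hxcomm l hl a
      have hgly := gen_left (fun b => ExteriorAlgebra.ι ℝ (e b)) (0:ℝ) hysq'
        (fun p q hpq => hycomm p q hpq) l hl a
      rw [hs' l hl]
      by_cases hm : a ∈ l
      · have h2 : ExteriorAlgebra.ι ℝ (e a) * lprod (fun b => ExteriorAlgebra.ι ℝ (e b)) l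
            = ((-1:ℝ) ^ (l.countP fun b => decide (b < a)) * 0) •
                lprod (fun b => ExteriorAlgebra.ι ℝ (e b)) (l.erase a) := hgly.1 hm
        rw [hgl.1 hm, map_smul, hs' _ (sorted_erase hl a), h2, IC_mem l hl a hm]
        module
      · have h2 : ExteriorAlgebra.ι ℝ (e a) * lprod (fun b => ExteriorAlgebra.ι ℝ (e b)) l
            = ((-1:ℝ) ^ (l.countP fun b => decide (b < a))) •
                lprod (fun b => ExteriorAlgebra.ι ℝ (e b)) (List.orderedInsert (· ≤ ·) a l) :=
          hgly.2 hm
        rw [hgl.2 hm, map_smul, hs' _ (sorted_oi hl hm), h2, IC0 a l hm]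
        module
    | zero => rw [mul_zero, map_zero, map_zero, mul_zero, smul_zero, add_zero]
    | add z1 z2 h1 h2 ih1 ih2 =>
      rw [mul_add, map_add, ih1, ih2, map_add, map_add, mul_add, smul_add]
      abel
    | smul r z hz ih =>
      rw [mul_smul_comm, map_smul, ih, map_smul, map_smul, smul_add, mul_smul_comm,
        smul_comm r (1/2:ℝ)]
  have P2 : ∀ (a : Fin n) (v : CliffordAlgebra Q),
      σ (CliffordAlgebra.involute v * x a)
        = ExteriorAlgebra.ι ℝ (e a) * σ v - (1/2:ℝ) • ic a (σ v) := by
    intro a v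
    induction hspan v using Submodule.span_induction with
    | mem z hz =>
      obtain ⟨l, hl, rfl⟩ := hz
      have hgr := gen_right x (1/2:ℝ) hxsq' hxcomm l hl a
      have hgly := gen_left (fun b => ExteriorAlgebra.ι ℝ (e b)) (0:ℝ) hysq'
        (fun p q hpq => hycomm p q hpq) l hl a
      rw [hs' l hl, invol_lprod x hinvx l, smul_mul_assoc, map_smul]
      by_cases hm : a ∈ l
      · have h2 : ExteriorAlgebra.ι ℝ (e a) * lprod (fun b => ExteriorAlgebra.ι ℝ (e b)) l
            = ((-1:ℝ) ^ (l.countP fun b => decide (b < a)) * 0) •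
                lprod (fun b => ExteriorAlgebra.ι ℝ (e b)) (l.erase a) := hgly.1 hm
        rw [hgr.1 hm, map_smul, hs' _ (sorted_erase hl a), h2, IC_mem l hl a hm]
        have hlen : (l.countP fun b => decide (b < a)) + (l.countP fun b => decide (a < b)) + 1
            = l.length := count_mem hl hm
        rw [← hlen]
        have hsq2 : ((-1:ℝ)) ^ (l.countP fun b => decide (a < b)) *
            ((-1:ℝ)) ^ (l.countP fun b => decide (a < b)) = 1 := by
          rw [← pow_add]
          exact Even.neg_one_pow ⟨(l.countP fun b => decide (a < b)), by ring⟩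
        rw [smul_smul]
        have hco : ((-1:ℝ)) ^ ((l.countP fun b => decide (b < a))
              + (l.countP fun b => decide (a < b)) + 1)
              * ((-1:ℝ) ^ (l.countP fun b => decide (a < b)) * (1/2))
            = -((-1:ℝ) ^ (l.countP fun b => decide (b < a)) * (1/2)) := by
          rw [pow_add, pow_add, pow_one]
          linear_combination (-(1/2) * ((-1:ℝ)) ^ (l.countP fun b => decide (b < a))) * hsq2
        rw [hco]
        module
      · have h2 : ExteriorAlgebra.ι ℝ (e a) * lprod (fun b => ExteriorAlgebra.ι ℝ (e b)) l
            = ((-1:ℝ) ^ (l.countP fun b => decide (b < a))) •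
                lprod (fun b => ExteriorAlgebra.ι ℝ (e b)) (List.orderedInsert (· ≤ ·) a l) :=
          hgly.2 hm
        rw [hgr.2 hm, map_smul, hs' _ (sorted_oi hl hm), h2, IC0 a l hm]
        have hlen : (l.countP fun b => decide (b < a)) + (l.countP fun b => decide (a < b))
            = l.length := count_not_mem hm
        rw [← hlen]
        have hsq2 : ((-1:ℝ)) ^ (l.countP fun b => decide (a < b)) *
            ((-1:ℝ)) ^ (l.countP fun b => decide (a < b)) = 1 := by
          rw [← pow_add]
          exact Even.neg_one_pow ⟨(l.countP fun b => decide (a < b)), by ring⟩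
        rw [smul_smul]
        have hco : ((-1:ℝ)) ^ ((l.countP fun b => decide (b < a))
              + (l.countP fun b => decide (a < b)))
              * ((-1:ℝ) ^ (l.countP fun b => decide (a < b)))
            = ((-1:ℝ) ^ (l.countP fun b => decide (b < a))) := by
          rw [pow_add]
          linear_combination (((-1:ℝ)) ^ (l.countP fun b => decide (b < a))) * hsq2
        rw [hco]
        module
    | zero => rw [map_zero, zero_mul, map_zero, map_zero, mul_zero, smul_zero, sub_zero]
    | add z1 z2 h1 h2 ih1 ih2 =>
      rw [map_add, add_mul, map_add, ih1, ih2, map_add, map_add, mul_add, smul_add]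
      abel
    | smul r z hz ih =>
      rw [map_smul, smul_mul_assoc, map_smul, ih, map_smul, map_smul, smul_sub, mul_smul_comm,
        smul_comm r (1/2:ℝ)]
  -- === final assembly ===
  intro w
  set u : ExteriorAlgebra ℝ g := σ w with hu
  have key : ∀ (v : CliffordAlgebra Q) (a : Fin n), σ (v * x a)
      = ExteriorAlgebra.ι ℝ (e a) * CliffordAlgebra.involute (σ v)
        - (1/2:ℝ) • ic a (CliffordAlgebra.involute (σ v)) := by
    intro v a
    have h := P2 a (CliffordAlgebra.involute v)
    rw [CliffordAlgebra.involute_involute, INV] at h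
    exact h
  have hA3 : ∀ a b c : Fin n, σ (x a * (x b * (x c * w)))
      = ExteriorAlgebra.ι ℝ (e a) * (ExteriorAlgebra.ι ℝ (e b) * (ExteriorAlgebra.ι ℝ (e c) * u))
      + (1/2:ℝ) • (ExteriorAlgebra.ι ℝ (e a) * (ExteriorAlgebra.ι ℝ (e b) * ic c u))
      + (1/2:ℝ) • (ExteriorAlgebra.ι ℝ (e a) * ic b (ExteriorAlgebra.ι ℝ (e c) * u))
      + (1/2:ℝ) • (ic a (ExteriorAlgebra.ι ℝ (e b) * (ExteriorAlgebra.ι ℝ (e c) * u)))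
      + (1/4:ℝ) • (ExteriorAlgebra.ι ℝ (e a) * ic b (ic c u))
      + (1/4:ℝ) • (ic a (ExteriorAlgebra.ι ℝ (e b) * ic c u))
      + (1/4:ℝ) • (ic a (ic b (ExteriorAlgebra.ι ℝ (e c) * u)))
      + (1/8:ℝ) • (ic a (ic b (ic c u))) := by
    intro a b c
    rw [P1, P1, P1, ← hu]
    simp only [mul_add, map_add, map_smul, smul_add, smul_smul, mul_smul_comm]
    module
  have hB3 : ∀ a b c : Fin n, σ (((CliffordAlgebra.involute w * x a) * x b) * x c)
      = -(ExteriorAlgebra.ι ℝ (e c) * (ExteriorAlgebra.ι ℝ (e b) * (ExteriorAlgebra.ι ℝ (e a) * u)))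
      + (1/2:ℝ) • (ExteriorAlgebra.ι ℝ (e c) * (ExteriorAlgebra.ι ℝ (e b) * ic a u))
      + (1/2:ℝ) • (ExteriorAlgebra.ι ℝ (e c) * ic b (ExteriorAlgebra.ι ℝ (e a) * u))
      + (1/2:ℝ) • (ic c (ExteriorAlgebra.ι ℝ (e b) * (ExteriorAlgebra.ι ℝ (e a) * u)))
      - (1/4:ℝ) • (ExteriorAlgebra.ι ℝ (e c) * ic b (ic a u))
      - (1/4:ℝ) • (ic c (ExteriorAlgebra.ι ℝ (e b) * ic a u))
      - (1/4:ℝ) • (ic c (ic b (ExteriorAlgebra.ι ℝ (e a) * u)))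
      + (1/8:ℝ) • (ic c (ic b (ic a u))) := by
    intro a b c
    rw [key, key, P2, ← hu]
    simp only [map_sub, map_add, map_mul, map_smul, map_neg, hinvy, invol_ic,
      CliffordAlgebra.involute_involute, mul_neg, neg_mul, mul_sub, sub_eq_add_neg,
      smul_neg, neg_neg, mul_add, smul_add, smul_smul, mul_smul_comm, smul_sub]
    module
  have hgw : σ (γ * w) = (-(1/6:ℝ)) •
      ∑ a, ∑ b, ∑ c, f a b c • σ (x a * (x b * (x c * w))) := by
    rw [hγ]
    simp only [smul_mul_assoc, Finset.sum_mul, map_smul, map_sum, mul_assoc]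
  have heg : σ (CliffordAlgebra.involute w * γ) = (-(1/6:ℝ)) •
      ∑ a, ∑ b, ∑ c, f a b c • σ (((CliffordAlgebra.involute w * x a) * x b) * x c) := by
    rw [hγ]
    simp only [Finset.mul_sum, mul_smul_comm, map_smul, map_sum, ← mul_assoc]
  have hf3 : ∀ a b c, f c b a = -f a b c := by
    intro a b c
    have h1 := hf1 b c a
    have h2 := hf_cyc b c a
    linarith
  -- == the sixteen sum evaluations ==
  -- abbreviation-free but mechanical
  have t3 : (∑ a, ∑ b, ∑ c, f a b c •
        (ExteriorAlgebra.ι ℝ (e a) * ic b (ExteriorAlgebra.ι ℝ (e c) * u)))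
      = ∑ a, ∑ b, ∑ c, f a b c •
        (ExteriorAlgebra.ι ℝ (e a) * (ExteriorAlgebra.ι ℝ (e b) * ic c u)) := by
    have step1 : (∑ a, ∑ b, ∑ c, f a b c •
          (ExteriorAlgebra.ι ℝ (e a) * ic b (ExteriorAlgebra.ι ℝ (e c) * u)))
        = ∑ a, ∑ b, ∑ c,
            (f a b c • ((if b = c then (1:ℝ) else 0) • (ExteriorAlgebra.ι ℝ (e a) * u))
            - f a b c • (ExteriorAlgebra.ι ℝ (e a) * (ExteriorAlgebra.ι ℝ (e c) * ic b u))) :=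
      Finset.sum_congr rfl fun a _ => Finset.sum_congr rfl fun b _ =>
        Finset.sum_congr rfl fun c _ => by rw [ic_mul_EI, mul_sub, mul_smul_comm]; module
    rw [step1]
    simp only [Finset.sum_sub_distrib]
    have hkill : (∑ a, ∑ b, ∑ c, f a b c •
        ((if b = c then (1:ℝ) else 0) • (ExteriorAlgebra.ι ℝ (e a) * u))) = 0 := by
      refine Finset.sum_eq_zero fun a _ => Finset.sum_eq_zero fun b _ =>
        Finset.sum_eq_zero fun c _ => ?_
      by_cases h : b = c
      · subst h; rw [hfe2, zero_smul]
      · rw [if_neg h, zero_smul, smul_zero]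
    rw [hkill, zero_sub, sum3_swap23 (fun a b c => f a b c •
      (ExteriorAlgebra.ι ℝ (e a) * (ExteriorAlgebra.ι ℝ (e c) * ic b u)))]
    have step2 : (∑ a, ∑ b, ∑ c, f a c b •
          (ExteriorAlgebra.ι ℝ (e a) * (ExteriorAlgebra.ι ℝ (e b) * ic c u)))
        = ∑ a, ∑ b, ∑ c, -(f a b c •
            (ExteriorAlgebra.ι ℝ (e a) * (ExteriorAlgebra.ι ℝ (e b) * ic c u))) :=
      Finset.sum_congr rfl fun a _ => Finset.sum_congr rfl fun b _ =>
        Finset.sum_congr rfl fun c _ => by rw [hf2, neg_smul]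
    rw [step2]
    simp only [Finset.sum_neg_distrib, neg_neg]
  have t4 : (∑ a, ∑ b, ∑ c, f a b c •
        (ic a (ExteriorAlgebra.ι ℝ (e b) * (ExteriorAlgebra.ι ℝ (e c) * u))))
      = ∑ a, ∑ b, ∑ c, f a b c •
        (ExteriorAlgebra.ι ℝ (e a) * (ExteriorAlgebra.ι ℝ (e b) * ic c u)) := by
    have step1 : (∑ a, ∑ b, ∑ c, f a b c •
          (ic a (ExteriorAlgebra.ι ℝ (e b) * (ExteriorAlgebra.ι ℝ (e c) * u))))
        = ∑ a, ∑ b, ∑ c,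
            (f a b c • ((if a = b then (1:ℝ) else 0) • (ExteriorAlgebra.ι ℝ (e c) * u))
            - f a b c • ((if a = c then (1:ℝ) else 0) • (ExteriorAlgebra.ι ℝ (e b) * u))
            + f a b c • (ExteriorAlgebra.ι ℝ (e b) * (ExteriorAlgebra.ι ℝ (e c) * ic a u))) :=
      Finset.sum_congr rfl fun a _ => Finset.sum_congr rfl fun b _ =>
        Finset.sum_congr rfl fun c _ => by rw [ic_mul_EI, ic_mul_EI, mul_sub, mul_smul_comm]; module
    rw [step1]
    simp only [Finset.sum_add_distrib, Finset.sum_sub_distrib]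
    have hkill1 : (∑ a, ∑ b, ∑ c, f a b c •
        ((if a = b then (1:ℝ) else 0) • (ExteriorAlgebra.ι ℝ (e c) * u))) = 0 := by
      refine Finset.sum_eq_zero fun a _ => Finset.sum_eq_zero fun b _ =>
        Finset.sum_eq_zero fun c _ => ?_
      by_cases h : a = b
      · subst h; rw [hfe1, zero_smul]
      · rw [if_neg h, zero_smul, smul_zero]
    have hkill2 : (∑ a, ∑ b, ∑ c, f a b c •
        ((if a = c then (1:ℝ) else 0) • (ExteriorAlgebra.ι ℝ (e b) * u))) = 0 := by
      refine Finset.sum_eq_zero fun a _ => Finset.sum_eq_zero fun b _ =>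
        Finset.sum_eq_zero fun c _ => ?_
      by_cases h : a = c
      · subst h; rw [hfe3, zero_smul]
      · rw [if_neg h, zero_smul, smul_zero]
    rw [hkill1, hkill2, sub_self, zero_add, sum3_cycR (fun a b c => f a b c •
      (ExteriorAlgebra.ι ℝ (e b) * (ExteriorAlgebra.ι ℝ (e c) * ic a u)))]
    exact Finset.sum_congr rfl fun a _ => Finset.sum_congr rfl fun b _ =>
      Finset.sum_congr rfl fun c _ => by rw [hf_cyc]
  have t6 : (∑ a, ∑ b, ∑ c, f a b c •
        (ic a (ExteriorAlgebra.ι ℝ (e b) * ic c u)))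
      = ∑ a, ∑ b, ∑ c, f a b c •
        (ExteriorAlgebra.ι ℝ (e a) * ic b (ic c u)) := by
    have step1 : (∑ a, ∑ b, ∑ c, f a b c •
          (ic a (ExteriorAlgebra.ι ℝ (e b) * ic c u)))
        = ∑ a, ∑ b, ∑ c,
            (f a b c • ((if a = b then (1:ℝ) else 0) • (ic c u))
            - f a b c • (ExteriorAlgebra.ι ℝ (e b) * ic a (ic c u))) :=
      Finset.sum_congr rfl fun a _ => Finset.sum_congr rfl fun b _ =>
        Finset.sum_congr rfl fun c _ => by rw [ic_mul_EI]; module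
    rw [step1]
    simp only [Finset.sum_sub_distrib]
    have hkill : (∑ a, ∑ b, ∑ c, f a b c •
        ((if a = b then (1:ℝ) else 0) • (ic c u))) = 0 := by
      refine Finset.sum_eq_zero fun a _ => Finset.sum_eq_zero fun b _ =>
        Finset.sum_eq_zero fun c _ => ?_
      by_cases h : a = b
      · subst h; rw [hfe1, zero_smul]
      · rw [if_neg h, zero_smul, smul_zero]
    rw [hkill, zero_sub, sum3_swap12 (fun a b c => f a b c •
      (ExteriorAlgebra.ι ℝ (e b) * ic a (ic c u)))]
    have step2 : (∑ a, ∑ b, ∑ c, f b a c •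
          (ExteriorAlgebra.ι ℝ (e a) * ic b (ic c u)))
        = ∑ a, ∑ b, ∑ c, -(f a b c •
            (ExteriorAlgebra.ι ℝ (e a) * ic b (ic c u))) :=
      Finset.sum_congr rfl fun a _ => Finset.sum_congr rfl fun b _ =>
        Finset.sum_congr rfl fun c _ => by rw [hf1, neg_smul]
    rw [step2]
    simp only [Finset.sum_neg_distrib, neg_neg]
  have t7 : (∑ a, ∑ b, ∑ c, f a b c •
        (ic a (ic b (ExteriorAlgebra.ι ℝ (e c) * u))))
      = ∑ a, ∑ b, ∑ c, f a b c •
        (ExteriorAlgebra.ι ℝ (e a) * ic b (ic c u)) := by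
    have step1 : (∑ a, ∑ b, ∑ c, f a b c •
          (ic a (ic b (ExteriorAlgebra.ι ℝ (e c) * u))))
        = ∑ a, ∑ b, ∑ c,
            (f a b c • ((if b = c then (1:ℝ) else 0) • (ic a u))
            - f a b c • ((if a = c then (1:ℝ) else 0) • (ic b u))
            + f a b c • (ExteriorAlgebra.ι ℝ (e c) * ic a (ic b u))) :=
      Finset.sum_congr rfl fun a _ => Finset.sum_congr rfl fun b _ =>
        Finset.sum_congr rfl fun c _ => by rw [ic_mul_EI, map_sub, map_smul, ic_mul_EI]; module
    rw [step1]
    simp only [Finset.sum_add_distrib, Finset.sum_sub_distrib]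
    have hkill1 : (∑ a, ∑ b, ∑ c, f a b c •
        ((if b = c then (1:ℝ) else 0) • (ic a u))) = 0 := by
      refine Finset.sum_eq_zero fun a _ => Finset.sum_eq_zero fun b _ =>
        Finset.sum_eq_zero fun c _ => ?_
      by_cases h : b = c
      · subst h; rw [hfe2, zero_smul]
      · rw [if_neg h, zero_smul, smul_zero]
    have hkill2 : (∑ a, ∑ b, ∑ c, f a b c •
        ((if a = c then (1:ℝ) else 0) • (ic b u))) = 0 := by
      refine Finset.sum_eq_zero fun a _ => Finset.sum_eq_zero fun b _ =>
        Finset.sum_eq_zero fun c _ => ?_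
      by_cases h : a = c
      · subst h; rw [hfe3, zero_smul]
      · rw [if_neg h, zero_smul, smul_zero]
    rw [hkill1, hkill2, sub_self, zero_add, sum3_cycL (fun a b c => f a b c •
      (ExteriorAlgebra.ι ℝ (e c) * ic a (ic b u)))]
    exact Finset.sum_congr rfl fun a _ => Finset.sum_congr rfl fun b _ =>
      Finset.sum_congr rfl fun c _ => by rw [(hf_cyc b c a).symm]
  have s1 : (∑ a, ∑ b, ∑ c, f a b c •
        (ExteriorAlgebra.ι ℝ (e c) * (ExteriorAlgebra.ι ℝ (e b) * (ExteriorAlgebra.ι ℝ (e a) * u))))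
      = -∑ a, ∑ b, ∑ c, f a b c •
        (ExteriorAlgebra.ι ℝ (e a) * (ExteriorAlgebra.ι ℝ (e b) * (ExteriorAlgebra.ι ℝ (e c) * u))) := by
    rw [sum3_swap13 (fun a b c => f a b c •
      (ExteriorAlgebra.ι ℝ (e c) * (ExteriorAlgebra.ι ℝ (e b) * (ExteriorAlgebra.ι ℝ (e a) * u))))]
    have step : (∑ a, ∑ b, ∑ c, f c b a •
          (ExteriorAlgebra.ι ℝ (e a) * (ExteriorAlgebra.ι ℝ (e b) * (ExteriorAlgebra.ι ℝ (e c) * u))))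
        = ∑ a, ∑ b, ∑ c, -(f a b c •
          (ExteriorAlgebra.ι ℝ (e a) * (ExteriorAlgebra.ι ℝ (e b) * (ExteriorAlgebra.ι ℝ (e c) * u)))) :=
      Finset.sum_congr rfl fun a _ => Finset.sum_congr rfl fun b _ =>
        Finset.sum_congr rfl fun c _ => by rw [hf3, neg_smul]
    rw [step]
    simp only [Finset.sum_neg_distrib]
  have s2 : (∑ a, ∑ b, ∑ c, f a b c •
        (ExteriorAlgebra.ι ℝ (e c) * (ExteriorAlgebra.ι ℝ (e b) * ic a u)))
      = -∑ a, ∑ b, ∑ c, f a b c •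
        (ExteriorAlgebra.ι ℝ (e a) * (ExteriorAlgebra.ι ℝ (e b) * ic c u)) := by
    rw [sum3_swap13 (fun a b c => f a b c •
      (ExteriorAlgebra.ι ℝ (e c) * (ExteriorAlgebra.ι ℝ (e b) * ic a u)))]
    have step : (∑ a, ∑ b, ∑ c, f c b a •
          (ExteriorAlgebra.ι ℝ (e a) * (ExteriorAlgebra.ι ℝ (e b) * ic c u)))
        = ∑ a, ∑ b, ∑ c, -(f a b c •
          (ExteriorAlgebra.ι ℝ (e a) * (ExteriorAlgebra.ι ℝ (e b) * ic c u))) :=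
      Finset.sum_congr rfl fun a _ => Finset.sum_congr rfl fun b _ =>
        Finset.sum_congr rfl fun c _ => by rw [hf3, neg_smul]
    rw [step]
    simp only [Finset.sum_neg_distrib]
  have s3 : (∑ a, ∑ b, ∑ c, f a b c •
        (ExteriorAlgebra.ι ℝ (e c) * ic b (ExteriorAlgebra.ι ℝ (e a) * u)))
      = -∑ a, ∑ b, ∑ c, f a b c •
        (ExteriorAlgebra.ι ℝ (e a) * (ExteriorAlgebra.ι ℝ (e b) * ic c u)) := by
    have step1 : (∑ a, ∑ b, ∑ c, f a b c •
          (ExteriorAlgebra.ι ℝ (e c) * ic b (ExteriorAlgebra.ι ℝ (e a) * u)))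
        = ∑ a, ∑ b, ∑ c,
            (f a b c • ((if b = a then (1:ℝ) else 0) • (ExteriorAlgebra.ι ℝ (e c) * u))
            - f a b c • (ExteriorAlgebra.ι ℝ (e c) * (ExteriorAlgebra.ι ℝ (e a) * ic b u))) :=
      Finset.sum_congr rfl fun a _ => Finset.sum_congr rfl fun b _ =>
        Finset.sum_congr rfl fun c _ => by rw [ic_mul_EI, mul_sub, mul_smul_comm]; module
    rw [step1]
    simp only [Finset.sum_sub_distrib]
    have hkill : (∑ a, ∑ b, ∑ c, f a b c •
        ((if b = a then (1:ℝ) else 0) • (ExteriorAlgebra.ι ℝ (e c) * u))) = 0 := by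
      refine Finset.sum_eq_zero fun a _ => Finset.sum_eq_zero fun b _ =>
        Finset.sum_eq_zero fun c _ => ?_
      by_cases h : b = a
      · subst h; rw [hfe1, zero_smul]
      · rw [if_neg h, zero_smul, smul_zero]
    rw [hkill, zero_sub, sum3_cycL (fun a b c => f a b c •
      (ExteriorAlgebra.ι ℝ (e c) * (ExteriorAlgebra.ι ℝ (e a) * ic b u)))]
    have step2 : (∑ a, ∑ b, ∑ c, f b c a •
          (ExteriorAlgebra.ι ℝ (e a) * (ExteriorAlgebra.ι ℝ (e b) * ic c u)))
        = ∑ a, ∑ b, ∑ c, (f a b c •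
            (ExteriorAlgebra.ι ℝ (e a) * (ExteriorAlgebra.ι ℝ (e b) * ic c u))) :=
      Finset.sum_congr rfl fun a _ => Finset.sum_congr rfl fun b _ =>
        Finset.sum_congr rfl fun c _ => by rw [(hf_cyc b c a).symm]
    rw [step2]
  have s4 : (∑ a, ∑ b, ∑ c, f a b c •
        (ic c (ExteriorAlgebra.ι ℝ (e b) * (ExteriorAlgebra.ι ℝ (e a) * u))))
      = -∑ a, ∑ b, ∑ c, f a b c •
        (ExteriorAlgebra.ι ℝ (e a) * (ExteriorAlgebra.ι ℝ (e b) * ic c u)) := by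
    have step1 : (∑ a, ∑ b, ∑ c, f a b c •
          (ic c (ExteriorAlgebra.ι ℝ (e b) * (ExteriorAlgebra.ι ℝ (e a) * u))))
        = ∑ a, ∑ b, ∑ c,
            (f a b c • ((if c = b then (1:ℝ) else 0) • (ExteriorAlgebra.ι ℝ (e a) * u))
            - f a b c • ((if c = a then (1:ℝ) else 0) • (ExteriorAlgebra.ι ℝ (e b) * u))
            + f a b c • (ExteriorAlgebra.ι ℝ (e b) * (ExteriorAlgebra.ι ℝ (e a) * ic c u))) :=
      Finset.sum_congr rfl fun a _ => Finset.sum_congr rfl fun b _ =>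
        Finset.sum_congr rfl fun c _ => by rw [ic_mul_EI, ic_mul_EI, mul_sub, mul_smul_comm]; module
    rw [step1]
    simp only [Finset.sum_add_distrib, Finset.sum_sub_distrib]
    have hkill1 : (∑ a, ∑ b, ∑ c, f a b c •
        ((if c = b then (1:ℝ) else 0) • (ExteriorAlgebra.ι ℝ (e a) * u))) = 0 := by
      refine Finset.sum_eq_zero fun a _ => Finset.sum_eq_zero fun b _ =>
        Finset.sum_eq_zero fun c _ => ?_
      by_cases h : c = b
      · subst h; rw [hfe2, zero_smul]
      · rw [if_neg h, zero_smul, smul_zero]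
    have hkill2 : (∑ a, ∑ b, ∑ c, f a b c •
        ((if c = a then (1:ℝ) else 0) • (ExteriorAlgebra.ι ℝ (e b) * u))) = 0 := by
      refine Finset.sum_eq_zero fun a _ => Finset.sum_eq_zero fun b _ =>
        Finset.sum_eq_zero fun c _ => ?_
      by_cases h : c = a
      · subst h; rw [hfe3, zero_smul]
      · rw [if_neg h, zero_smul, smul_zero]
    rw [hkill1, hkill2, sub_self, zero_add, sum3_swap12 (fun a b c => f a b c •
      (ExteriorAlgebra.ι ℝ (e b) * (ExteriorAlgebra.ι ℝ (e a) * ic c u)))]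
    have step2 : (∑ a, ∑ b, ∑ c, f b a c •
          (ExteriorAlgebra.ι ℝ (e a) * (ExteriorAlgebra.ι ℝ (e b) * ic c u)))
        = ∑ a, ∑ b, ∑ c, -(f a b c •
            (ExteriorAlgebra.ι ℝ (e a) * (ExteriorAlgebra.ι ℝ (e b) * ic c u))) :=
      Finset.sum_congr rfl fun a _ => Finset.sum_congr rfl fun b _ =>
        Finset.sum_congr rfl fun c _ => by rw [hf1, neg_smul]
    rw [step2]
    simp only [Finset.sum_neg_distrib]
  have s5 : (∑ a, ∑ b, ∑ c, f a b c •
        (ExteriorAlgebra.ι ℝ (e c) * ic b (ic a u)))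
      = -∑ a, ∑ b, ∑ c, f a b c •
        (ExteriorAlgebra.ι ℝ (e a) * ic b (ic c u)) := by
    rw [sum3_swap13 (fun a b c => f a b c •
      (ExteriorAlgebra.ι ℝ (e c) * ic b (ic a u)))]
    have step : (∑ a, ∑ b, ∑ c, f c b a •
          (ExteriorAlgebra.ι ℝ (e a) * ic b (ic c u)))
        = ∑ a, ∑ b, ∑ c, -(f a b c •
          (ExteriorAlgebra.ι ℝ (e a) * ic b (ic c u))) :=
      Finset.sum_congr rfl fun a _ => Finset.sum_congr rfl fun b _ =>
        Finset.sum_congr rfl fun c _ => by rw [hf3, neg_smul]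
    rw [step]
    simp only [Finset.sum_neg_distrib]
  have s6 : (∑ a, ∑ b, ∑ c, f a b c •
        (ic c (ExteriorAlgebra.ι ℝ (e b) * ic a u)))
      = -∑ a, ∑ b, ∑ c, f a b c •
        (ExteriorAlgebra.ι ℝ (e a) * ic b (ic c u)) := by
    have step1 : (∑ a, ∑ b, ∑ c, f a b c •
          (ic c (ExteriorAlgebra.ι ℝ (e b) * ic a u)))
        = ∑ a, ∑ b, ∑ c,
            (f a b c • ((if c = b then (1:ℝ) else 0) • (ic a u))
            - f a b c • (ExteriorAlgebra.ι ℝ (e b) * ic c (ic a u))) :=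
      Finset.sum_congr rfl fun a _ => Finset.sum_congr rfl fun b _ =>
        Finset.sum_congr rfl fun c _ => by rw [ic_mul_EI]; module
    rw [step1]
    simp only [Finset.sum_sub_distrib]
    have hkill : (∑ a, ∑ b, ∑ c, f a b c •
        ((if c = b then (1:ℝ) else 0) • (ic a u))) = 0 := by
      refine Finset.sum_eq_zero fun a _ => Finset.sum_eq_zero fun b _ =>
        Finset.sum_eq_zero fun c _ => ?_
      by_cases h : c = b
      · subst h; rw [hfe2, zero_smul]
      · rw [if_neg h, zero_smul, smul_zero]
    rw [hkill, zero_sub, sum3_cycR (fun a b c => f a b c •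
      (ExteriorAlgebra.ι ℝ (e b) * ic c (ic a u)))]
    have step2 : (∑ a, ∑ b, ∑ c, f c a b •
          (ExteriorAlgebra.ι ℝ (e a) * ic b (ic c u)))
        = ∑ a, ∑ b, ∑ c, (f a b c •
            (ExteriorAlgebra.ι ℝ (e a) * ic b (ic c u))) :=
      Finset.sum_congr rfl fun a _ => Finset.sum_congr rfl fun b _ =>
        Finset.sum_congr rfl fun c _ => by rw [hf_cyc]
    rw [step2]
  have s7 : (∑ a, ∑ b, ∑ c, f a b c •
        (ic c (ic b (ExteriorAlgebra.ι ℝ (e a) * u))))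
      = -∑ a, ∑ b, ∑ c, f a b c •
        (ExteriorAlgebra.ι ℝ (e a) * ic b (ic c u)) := by
    have step1 : (∑ a, ∑ b, ∑ c, f a b c •
          (ic c (ic b (ExteriorAlgebra.ι ℝ (e a) * u))))
        = ∑ a, ∑ b, ∑ c,
            (f a b c • ((if b = a then (1:ℝ) else 0) • (ic c u))
            - f a b c • ((if c = a then (1:ℝ) else 0) • (ic b u))
            + f a b c • (ExteriorAlgebra.ι ℝ (e a) * ic c (ic b u))) :=
      Finset.sum_congr rfl fun a _ => Finset.sum_congr rfl fun b _ =>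
        Finset.sum_congr rfl fun c _ => by
          rw [ic_mul_EI, map_sub, map_smul, ic_mul_EI]; module
    rw [step1]
    simp only [Finset.sum_add_distrib, Finset.sum_sub_distrib]
    have hkill1 : (∑ a, ∑ b, ∑ c, f a b c •
        ((if b = a then (1:ℝ) else 0) • (ic c u))) = 0 := by
      refine Finset.sum_eq_zero fun a _ => Finset.sum_eq_zero fun b _ =>
        Finset.sum_eq_zero fun c _ => ?_
      by_cases h : b = a
      · subst h; rw [hfe1, zero_smul]
      · rw [if_neg h, zero_smul, smul_zero]
    have hkill2 : (∑ a, ∑ b, ∑ c, f a b c •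
        ((if c = a then (1:ℝ) else 0) • (ic b u))) = 0 := by
      refine Finset.sum_eq_zero fun a _ => Finset.sum_eq_zero fun b _ =>
        Finset.sum_eq_zero fun c _ => ?_
      by_cases h : c = a
      · subst h; rw [hfe3, zero_smul]
      · rw [if_neg h, zero_smul, smul_zero]
    rw [hkill1, hkill2, sub_self, zero_add, sum3_swap23 (fun a b c => f a b c •
      (ExteriorAlgebra.ι ℝ (e a) * ic c (ic b u)))]
    have step2 : (∑ a, ∑ b, ∑ c, f a c b •
          (ExteriorAlgebra.ι ℝ (e a) * ic b (ic c u)))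
        = ∑ a, ∑ b, ∑ c, -(f a b c •
            (ExteriorAlgebra.ι ℝ (e a) * ic b (ic c u))) :=
      Finset.sum_congr rfl fun a _ => Finset.sum_congr rfl fun b _ =>
        Finset.sum_congr rfl fun c _ => by rw [hf2, neg_smul]
    rw [step2]
    simp only [Finset.sum_neg_distrib]
  have s8 : (∑ a, ∑ b, ∑ c, f a b c • (ic c (ic b (ic a u))))
      = -∑ a, ∑ b, ∑ c, f a b c • (ic a (ic b (ic c u))) := by
    rw [sum3_swap13 (fun a b c => f a b c • (ic c (ic b (ic a u))))]
    have step : (∑ a, ∑ b, ∑ c, f c b a • (ic a (ic b (ic c u))))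
        = ∑ a, ∑ b, ∑ c, -(f a b c • (ic a (ic b (ic c u)))) :=
      Finset.sum_congr rfl fun a _ => Finset.sum_congr rfl fun b _ =>
        Finset.sum_congr rfl fun c _ => by rw [hf3, neg_smul]
    rw [step]
    simp only [Finset.sum_neg_distrib]
  have htarget : (∑ a, ∑ b, ∑ c, f a b c •
        (ExteriorAlgebra.ι ℝ (e b) * (ExteriorAlgebra.ι ℝ (e c) * ic a u)))
      = ∑ a, ∑ b, ∑ c, f a b c •
        (ExteriorAlgebra.ι ℝ (e a) * (ExteriorAlgebra.ι ℝ (e b) * ic c u)) := by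
    rw [sum3_cycR (fun a b c => f a b c •
      (ExteriorAlgebra.ι ℝ (e b) * (ExteriorAlgebra.ι ℝ (e c) * ic a u)))]
    exact Finset.sum_congr rfl fun a _ => Finset.sum_congr rfl fun b _ =>
      Finset.sum_congr rfl fun c _ => by rw [hf_cyc]
  -- put everything together
  rw [map_sub, hgw, heg]
  simp only [hA3, hB3]
  simp only [smul_add, smul_sub, smul_neg, smul_smul, Finset.sum_add_distrib,
    Finset.sum_sub_distrib, Finset.sum_neg_distrib]
  simp only [sum3_smul_out f (1/2:ℝ), sum3_smul_out f (1/4:ℝ), sum3_smul_out f (1/8:ℝ)]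
  rw [t3, t4, t6, t7, s1, s2, s3, s4, s5, s6, s7, s8, htarget]
  module
end

section
/- Define d_G: U(𝔤) ⊗ B → U(𝔤) ⊗ B as the linear map with d_G(u ⊗ b) = u ⊗ d(b) − ½ Σ_a (u_a·u + u·u_a) ⊗ ι_a(b) + (1/24) Σ_{a,b,c} f_{abc} u ⊗ (ι_a ι_b ι_c)(b). Then for every element ω ∈ U(𝔤) ⊗ B that is invariant — i.e. L^{tot}_a(ω) = 0 for all a, where L^{tot}_a(u ⊗ b) = (u_a·u − u·u_a) ⊗ b + u ⊗ L_a(b) — one has d_G(d_G(ω)) = 0. -/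
open scoped TensorProduct

section Aux
lemma aux_self_neg {M : Type*} [AddCommGroup M] [Module ℝ M] {x : M} (h : x = -x) : x = 0 := by
  have h2 : (2:ℝ) • x = 0 := by rw [two_smul]; nth_rewrite 1 [h]; simp
  have := congrArg (fun y => (2:ℝ)⁻¹ • y) h2
  simpa [smul_smul] using this

lemma aux_sum_rot {α β γ M : Type*} [Fintype α] [Fintype β] [Fintype γ] [AddCommMonoid M]
    (G : α → β → γ → M) :
    ∑ a, ∑ b, ∑ c, G a b c = ∑ b, ∑ c, ∑ a, G a b c := by
  rw [Finset.sum_comm]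
  exact Finset.sum_congr rfl fun b _ => Finset.sum_comm

lemma aux_sum_anti {α M : Type*} [Fintype α] [AddCommGroup M] [Module ℝ M]
    (F : α → α → M) (h : ∀ i j, F i j = - F j i) :
    ∑ i, ∑ j, F i j = 0 := by
  apply aux_self_neg
  calc ∑ i, ∑ j, F i j = ∑ i, ∑ j, -F j i :=
        Finset.sum_congr rfl fun i _ => Finset.sum_congr rfl fun j _ => h i j
    _ = -∑ i, ∑ j, F j i := by simp
    _ = -∑ i, ∑ j, F i j := by rw [Finset.sum_comm]

lemma aux_sum4_reorder {α M : Type*} [Fintype α] [AddCommMonoid M]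
    (G : α → α → α → α → M) :
    ∑ a, ∑ b, ∑ c, ∑ d, G a b c d = ∑ c, ∑ d, ∑ a, ∑ b, G a b c d := by
  calc ∑ a, ∑ b, ∑ c, ∑ d, G a b c d
      = ∑ a, ∑ c, ∑ d, ∑ b, G a b c d :=
        Finset.sum_congr rfl fun a _ => aux_sum_rot _
    _ = ∑ c, ∑ d, ∑ a, ∑ b, G a b c d := aux_sum_rot _

lemma aux_move3 {A : Type*} [Ring A] {n : ℕ} (E : Fin n → A)
    (h : ∀ a b, E a * E b = -(E b * E a)) (x p q r : Fin n) :
    E x * (E p * E q * E r) = -(E p * E q * E r * E x) := by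
  calc E x * (E p * E q * E r) = E x * E p * E q * E r := by noncomm_ring
    _ = -(E p * E x) * E q * E r := by rw [h x p]
    _ = -(E p * (E x * E q) * E r) := by noncomm_ring
    _ = -(E p * (-(E q * E x)) * E r) := by rw [h x q]
    _ = E p * E q * (E x * E r) := by noncomm_ring
    _ = E p * E q * (-(E r * E x)) := by rw [h x r]
    _ = -(E p * E q * E r * E x) := by noncomm_ring

lemma aux_swap33 {A : Type*} [Ring A] {n : ℕ} (E : Fin n → A)
    (h : ∀ a b, E a * E b = -(E b * E a)) (a b c p q r : Fin n) :
    (E a * E b * E c) * (E p * E q * E r) = -((E p * E q * E r) * (E a * E b * E c)) := by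
  have m := aux_move3 E h
  calc (E a * E b * E c) * (E p * E q * E r)
      = E a * (E b * (E c * (E p * E q * E r))) := by noncomm_ring
    _ = E a * (E b * (-(E p * E q * E r * E c))) := by rw [m c p q r]
    _ = -(E a * ((E b * (E p * E q * E r)) * E c)) := by noncomm_ring
    _ = -(E a * ((-(E p * E q * E r * E b)) * E c)) := by rw [m b p q r]
    _ = (E a * (E p * E q * E r)) * (E b * E c) := by noncomm_ring
    _ = (-(E p * E q * E r * E a)) * (E b * E c) := by rw [m a p q r]
    _ = -((E p * E q * E r) * (E a * E b * E c)) := by noncomm_ring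

lemma aux_mulLeft_sub {A : Type*} [Ring A] [Algebra ℝ A] (x y : A) :
    LinearMap.mulLeft ℝ (x - y) = LinearMap.mulLeft ℝ x - LinearMap.mulLeft ℝ y := by
  ext z; simp [sub_mul]

lemma aux_mulRight_sub {A : Type*} [Ring A] [Algebra ℝ A] (x y : A) :
    LinearMap.mulRight ℝ (x - y) = LinearMap.mulRight ℝ x - LinearMap.mulRight ℝ y := by
  ext z; simp [mul_sub]

lemma aux_mulLeft_sum {A : Type*} [Ring A] [Algebra ℝ A] {κ : Type*} (s : Finset κ) (g : κ → A) :
    LinearMap.mulLeft ℝ (∑ c ∈ s, g c) = ∑ c ∈ s, LinearMap.mulLeft ℝ (g c) := by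
  ext z; simp [Finset.sum_mul]

lemma aux_mulRight_sum {A : Type*} [Ring A] [Algebra ℝ A] {κ : Type*} (s : Finset κ) (g : κ → A) :
    LinearMap.mulRight ℝ (∑ c ∈ s, g c) = ∑ c ∈ s, LinearMap.mulRight ℝ (g c) := by
  ext z; simp [Finset.mul_sum]

lemma aux_mulLeft_smul {A : Type*} [Ring A] [Algebra ℝ A] (r : ℝ) (x : A) :
    LinearMap.mulLeft ℝ (r • x) = r • LinearMap.mulLeft ℝ x := by
  ext z; simp [smul_mul_assoc]

lemma aux_mulRight_smul {A : Type*} [Ring A] [Algebra ℝ A] (r : ℝ) (x : A) :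
    LinearMap.mulRight ℝ (r • x) = r • LinearMap.mulRight ℝ x := by
  ext z; simp [mul_smul_comm]

end Aux

lemma aux_cprime {n : ℕ} {V : Type*} [AddCommGroup V] [Module ℝ V]
    (f : Fin n → Fin n → Fin n → ℝ)
    (hf_ba : ∀ a b c, f b a c = - f a b c)
    (hf_acb : ∀ a b c, f a c b = - f a b c)
    (ιV LV : Fin n → Module.End ℝ V) (dV : Module.End ℝ V)
    (h_ιι : ∀ a b, ιV a * ιV b = -(ιV b * ιV a))
    (h_Cartan : ∀ a, dV * ιV a + ιV a * dV = LV a)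
    (h_Lι : ∀ a b, LV a * ιV b = ιV b * LV a + ∑ c, f a b c • ιV c) :
    dV * (∑ a, ∑ b, ∑ c, f a b c • (ιV a * ιV b * ιV c))
      + (∑ a, ∑ b, ∑ c, f a b c • (ιV a * ιV b * ιV c)) * dV
    = (3:ℝ) • ∑ a, ∑ b, ∑ c, f a b c • (ιV a * ιV b * LV c) := by
  have hcyc : ∀ a b c, f c a b = f a b c := by
    intro a b c; rw [hf_ba a c b, hf_acb a b c, neg_neg]
  have raw : ∀ a b c, dV * (ιV a * ιV b * ιV c) + (ιV a * ιV b * ιV c) * dV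
      = (ιV b * ιV c * LV a + ∑ d, f a b d • (ιV d * ιV c) + ∑ d, f a c d • (ιV b * ιV d))
        - (ιV a * ιV c * LV b + ∑ d, f b c d • (ιV a * ιV d))
        + ιV a * ιV b * LV c := by
    intro a b c
    have e1 : dV * (ιV a * ιV b * ιV c) + (ιV a * ιV b * ιV c) * dV
        = LV a * (ιV b * ιV c) - ιV a * (LV b * ιV c) + ιV a * ιV b * LV c := by
      rw [← h_Cartan a, ← h_Cartan b, ← h_Cartan c]; noncomm_ring
    have e2 : LV a * (ιV b * ιV c)
        = ιV b * ιV c * LV a + ∑ d, f a b d • (ιV d * ιV c) + ∑ d, f a c d • (ιV b * ιV d) := by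
      calc LV a * (ιV b * ιV c) = (LV a * ιV b) * ιV c := by rw [mul_assoc]
        _ = (ιV b * LV a + ∑ d, f a b d • ιV d) * ιV c := by rw [h_Lι a b]
        _ = ιV b * (LV a * ιV c) + (∑ d, f a b d • ιV d) * ιV c := by noncomm_ring
        _ = ιV b * (ιV c * LV a + ∑ d, f a c d • ιV d) + (∑ d, f a b d • ιV d) * ιV c := by
            rw [h_Lι a c]
        _ = ιV b * ιV c * LV a + ∑ d, f a b d • (ιV d * ιV c) + ∑ d, f a c d • (ιV b * ιV d) := by
            rw [mul_add, Finset.sum_mul, Finset.mul_sum]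
            simp only [smul_mul_assoc, mul_smul_comm, ← mul_assoc]
            abel
    have e3 : ιV a * (LV b * ιV c) = ιV a * ιV c * LV b + ∑ d, f b c d • (ιV a * ιV d) := by
      rw [h_Lι b c, mul_add, Finset.mul_sum]
      simp only [mul_smul_comm, ← mul_assoc]
    rw [e1, e2, e3]
  have key : ∀ a b c, f a b c • (dV * (ιV a * ιV b * ιV c) + (ιV a * ιV b * ιV c) * dV)
      = (f a b c • (ιV b * ιV c * LV a) + ∑ d, (f a b c * f a b d) • (ιV d * ιV c)
          + ∑ d, (f a b c * f a c d) • (ιV b * ιV d))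
        - (f a b c • (ιV a * ιV c * LV b) + ∑ d, (f a b c * f b c d) • (ιV a * ιV d))
        + f a b c • (ιV a * ιV b * LV c) := by
    intro a b c
    rw [raw a b c]
    simp only [smul_add, smul_sub, Finset.smul_sum, smul_smul]
  have expand : dV * (∑ a, ∑ b, ∑ c, f a b c • (ιV a * ιV b * ιV c))
      + (∑ a, ∑ b, ∑ c, f a b c • (ιV a * ιV b * ιV c)) * dV
      = ∑ a, ∑ b, ∑ c, f a b c •
          (dV * (ιV a * ιV b * ιV c) + (ιV a * ιV b * ιV c) * dV) := by
    simp only [Finset.mul_sum, Finset.sum_mul, mul_smul_comm, smul_mul_assoc,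
      ← Finset.sum_add_distrib, ← smul_add]
  -- the five sums
  have hS1 : ∑ a, ∑ b, ∑ c, f a b c • (ιV b * ιV c * LV a)
      = ∑ a, ∑ b, ∑ c, f a b c • (ιV a * ιV b * LV c) := by
    rw [aux_sum_rot (fun a b c => f a b c • (ιV b * ιV c * LV a))]
    exact Finset.sum_congr rfl fun i _ => Finset.sum_congr rfl fun j _ =>
      Finset.sum_congr rfl fun k _ => by rw [hcyc i j k]
  have hS4 : ∑ a, ∑ b, ∑ c, f a b c • (ιV a * ιV c * LV b)
      = -∑ a, ∑ b, ∑ c, f a b c • (ιV a * ιV b * LV c) := by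
    calc ∑ a, ∑ b, ∑ c, f a b c • (ιV a * ιV c * LV b)
        = ∑ a, ∑ c, ∑ b, f a b c • (ιV a * ιV c * LV b) :=
          Finset.sum_congr rfl fun a _ => Finset.sum_comm
      _ = -∑ a, ∑ b, ∑ c, f a b c • (ιV a * ιV b * LV c) := by
          simp only [← Finset.sum_neg_distrib]
          exact Finset.sum_congr rfl fun a _ => Finset.sum_congr rfl fun j _ =>
            Finset.sum_congr rfl fun k _ => by rw [hf_acb a j k, neg_smul]
  have hS2 : ∑ a, ∑ b, ∑ c, ∑ d, (f a b c * f a b d) • (ιV d * ιV c) = 0 := by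
    rw [aux_sum4_reorder (fun a b c d => (f a b c * f a b d) • (ιV d * ιV c))]
    refine aux_sum_anti _ fun i j => ?_
    simp only [← Finset.sum_neg_distrib]
    refine Finset.sum_congr rfl fun a _ => Finset.sum_congr rfl fun b _ => ?_
    rw [h_ιι j i, smul_neg, mul_comm (f a b i) (f a b j)]
  have hS3 : ∑ a, ∑ b, ∑ c, ∑ d, (f a b c * f a c d) • (ιV b * ιV d) = 0 := by
    calc ∑ a, ∑ b, ∑ c, ∑ d, (f a b c * f a c d) • (ιV b * ιV d)
        = ∑ b, ∑ a, ∑ c, ∑ d, (f a b c * f a c d) • (ιV b * ιV d) := Finset.sum_comm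
      _ = ∑ b, ∑ c, ∑ d, ∑ a, (f a b c * f a c d) • (ιV b * ιV d) :=
          Finset.sum_congr rfl fun b _ => aux_sum_rot _
      _ = ∑ b, ∑ d, ∑ a, ∑ c, (f a b c * f a c d) • (ιV b * ιV d) :=
          Finset.sum_congr rfl fun b _ => aux_sum_rot _
      _ = 0 := by
          refine aux_sum_anti _ fun i j => ?_
          simp only [← Finset.sum_neg_distrib]
          refine Finset.sum_congr rfl fun a _ => Finset.sum_congr rfl fun c _ => ?_
          rw [hf_acb a c j, hf_acb a i c, h_ιι j i, neg_mul_neg, smul_neg, neg_neg, mul_comm (f a c j) (f a i c)]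
  have hS5 : ∑ a, ∑ b, ∑ c, ∑ d, (f a b c * f b c d) • (ιV a * ιV d) = 0 := by
    calc ∑ a, ∑ b, ∑ c, ∑ d, (f a b c * f b c d) • (ιV a * ιV d)
        = ∑ a, ∑ c, ∑ d, ∑ b, (f a b c * f b c d) • (ιV a * ιV d) :=
          Finset.sum_congr rfl fun a _ => aux_sum_rot _
      _ = ∑ a, ∑ d, ∑ b, ∑ c, (f a b c * f b c d) • (ιV a * ιV d) :=
          Finset.sum_congr rfl fun a _ => aux_sum_rot _
      _ = 0 := by
          refine aux_sum_anti _ fun i j => ?_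
          simp only [← Finset.sum_neg_distrib]
          refine Finset.sum_congr rfl fun b _ => Finset.sum_congr rfl fun c _ => ?_
          rw [show f j b c = f b c j from hcyc b c j,
            show f b c i = f i b c from (hcyc b c i).symm, h_ιι j i, smul_neg, neg_neg, mul_comm (f b c j) (f i b c)]
  calc dV * (∑ a, ∑ b, ∑ c, f a b c • (ιV a * ιV b * ιV c))
      + (∑ a, ∑ b, ∑ c, f a b c • (ιV a * ιV b * ιV c)) * dV
      = ∑ a, ∑ b, ∑ c, f a b c •
          (dV * (ιV a * ιV b * ιV c) + (ιV a * ιV b * ιV c) * dV) := expand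
    _ = ∑ a, ∑ b, ∑ c,
        ((f a b c • (ιV b * ιV c * LV a) + ∑ d, (f a b c * f a b d) • (ιV d * ιV c)
          + ∑ d, (f a b c * f a c d) • (ιV b * ιV d))
        - (f a b c • (ιV a * ιV c * LV b) + ∑ d, (f a b c * f b c d) • (ιV a * ιV d))
        + f a b c • (ιV a * ιV b * LV c)) :=
        Finset.sum_congr rfl fun a _ => Finset.sum_congr rfl fun b _ =>
          Finset.sum_congr rfl fun c _ => key a b c
    _ = ((∑ a, ∑ b, ∑ c, f a b c • (ιV b * ιV c * LV a))
          + (∑ a, ∑ b, ∑ c, ∑ d, (f a b c * f a b d) • (ιV d * ιV c))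
          + (∑ a, ∑ b, ∑ c, ∑ d, (f a b c * f a c d) • (ιV b * ιV d)))
        - ((∑ a, ∑ b, ∑ c, f a b c • (ιV a * ιV c * LV b))
          + (∑ a, ∑ b, ∑ c, ∑ d, (f a b c * f b c d) • (ιV a * ιV d)))
        + ∑ a, ∑ b, ∑ c, f a b c • (ιV a * ιV b * LV c) := by
        simp only [Finset.sum_add_distrib, Finset.sum_sub_distrib]
    _ = (3:ℝ) • ∑ a, ∑ b, ∑ c, f a b c • (ιV a * ιV b * LV c) := by
        rw [hS1, hS2, hS3, hS4, hS5]; module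

theorem aux_main {n : ℕ} (f : Fin n → Fin n → Fin n → ℝ)
    (hf_ba : ∀ a b c, f b a c = - f a b c)
    (hf_acb : ∀ a b c, f a c b = - f a b c)
    {A : Type*} [Ring A] [Algebra ℝ A]
    (u : Fin n → A)
    (hcom : ∀ a b, u a * u b - u b * u a = ∑ c, f a b c • u c)
    (hCas : ∀ x : A, (∑ a, u a * u a) * x = x * (∑ a, u a * u a))
    {V : Type*} [AddCommGroup V] [Module ℝ V]
    (ιV LV : Fin n → Module.End ℝ V) (dV : Module.End ℝ V)
    (h_dd : dV * dV = 0)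
    (h_ιι : ∀ a b, ιV a * ιV b = -(ιV b * ιV a))
    (h_Cartan : ∀ a, dV * ιV a + ιV a * dV = LV a)
    (h_Lι : ∀ a b, LV a * ιV b = ιV b * LV a + ∑ c, f a b c • ιV c)
    (dG : Module.End ℝ (A ⊗[ℝ] V))
    (hdG : dG = TensorProduct.map LinearMap.id dV
      - (1 / 2 : ℝ) • ∑ a, TensorProduct.map
          (LinearMap.mulLeft ℝ (u a) + LinearMap.mulRight ℝ (u a)) (ιV a)
      + (1 / 24 : ℝ) • ∑ a, ∑ b, ∑ c, f a b c •
          TensorProduct.map LinearMap.id (ιV a * ιV b * ιV c))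
    (Ltot : Fin n → Module.End ℝ (A ⊗[ℝ] V))
    (hLtot : ∀ a, Ltot a = TensorProduct.map
        (LinearMap.mulLeft ℝ (u a) - LinearMap.mulRight ℝ (u a)) LinearMap.id
      + TensorProduct.map LinearMap.id (LV a)) :
    ∀ ω : A ⊗[ℝ] V, (∀ a, Ltot a ω = 0) → dG (dG ω) = 0 := by
  letI : AddCommGroup (A ⊗[ℝ] V) := TensorProduct.addCommGroup
  letI : Ring (Module.End ℝ (A ⊗[ℝ] V)) := Module.End.instRing
  letI : Ring (Module.End ℝ A) := Module.End.instRing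
  simp only [← Module.End.one_eq_id] at hdG hLtot
  intro ω hω
  -- abbreviations
  set X := TensorProduct.map (1 : Module.End ℝ A) dV with hX_def
  set Y := ∑ a, TensorProduct.map
      (LinearMap.mulLeft ℝ (u a) + LinearMap.mulRight ℝ (u a)) (ιV a) with hY_def
  set Z := ∑ a, ∑ b, ∑ c, f a b c •
      TensorProduct.map (1 : Module.End ℝ A) (ιV a * ιV b * ιV c) with hZ_def
  set z := ∑ a, ∑ b, ∑ c, f a b c • (ιV a * ιV b * ιV c) with hz_def
  set w := ∑ a, ∑ b, ∑ c, f a b c • (ιV a * ιV b * LV c) with hw_def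
  -- general helpers about TensorProduct.map
  have hmapmul : ∀ (F F' : Module.End ℝ A) (G G' : Module.End ℝ V),
      TensorProduct.map F G * TensorProduct.map F' G'
        = TensorProduct.map (F * F') (G * G') :=
    fun F F' G G' => (TensorProduct.map_mul F F' G G').symm
  have hmap_sum_left : ∀ {κ : Type} (s : Finset κ) (F : κ → Module.End ℝ A)
      (G : Module.End ℝ V),
      TensorProduct.map (∑ i ∈ s, F i) G = ∑ i ∈ s, TensorProduct.map (F i) G := by
    intro κ s F G
    apply TensorProduct.ext'
    intro x y
    simp [TensorProduct.sum_tmul, LinearMap.sum_apply]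
  have hmap_sub_left : ∀ (F F' : Module.End ℝ A) (G : Module.End ℝ V),
      TensorProduct.map (F - F') G = TensorProduct.map F G - TensorProduct.map F' G := by
    intro F F' G
    apply TensorProduct.ext'
    intro x y
    simp [TensorProduct.sub_tmul]
  have hmap_zero_left : ∀ (G : Module.End ℝ V),
      TensorProduct.map (0 : Module.End ℝ A) G = 0 := by
    intro G; apply TensorProduct.ext'; intro x y
    simp
  have hmap_sum_right : ∀ (F : Module.End ℝ A) {κ : Type} (s : Finset κ)
      (G : κ → Module.End ℝ V),
      TensorProduct.map F (∑ i ∈ s, G i) = ∑ i ∈ s, TensorProduct.map F (G i) := by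
    intro F κ s G
    apply TensorProduct.ext'
    intro x y
    simp [TensorProduct.tmul_sum, LinearMap.sum_apply]
  have hmap_add_right := fun (F : Module.End ℝ A) (G G' : Module.End ℝ V) =>
    TensorProduct.map_add_right F G G'
  -- Z = map 1 z
  have hzZ : Z = TensorProduct.map (1 : Module.End ℝ A) z := by
    rw [hZ_def, hz_def]
    simp only [hmap_sum_right, TensorProduct.map_smul_right]
  -- X * X = 0
  have hXX : X * X = 0 := by
    rw [hX_def, hmapmul, one_mul, h_dd]
    apply TensorProduct.ext'; intro x y; simp
  -- X * Y + Y * X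
  have hXY : X * Y + Y * X = ∑ a, TensorProduct.map
      (LinearMap.mulLeft ℝ (u a) + LinearMap.mulRight ℝ (u a)) (LV a) := by
    rw [hX_def, hY_def, Finset.mul_sum, Finset.sum_mul, ← Finset.sum_add_distrib]
    refine Finset.sum_congr rfl fun a _ => ?_
    rw [hmapmul, hmapmul, one_mul, mul_one, ← hmap_add_right, h_Cartan a]
  -- X * Z + Z * X
  have hXZ : X * Z + Z * X = (3:ℝ) • ∑ a, ∑ b, ∑ c, f a b c •
      TensorProduct.map (1 : Module.End ℝ A) (ιV a * ιV b * LV c) := by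
    rw [hX_def, hzZ, hmapmul, hmapmul, one_mul, ← hmap_add_right]
    rw [show dV * z + z * dV = (3:ℝ) • w by
      rw [hz_def, hw_def]; exact aux_cprime f hf_ba hf_acb ιV LV dV h_ιι h_Cartan h_Lι]
    rw [TensorProduct.map_smul_right, hw_def]
    simp only [hmap_sum_right, TensorProduct.map_smul_right]
  -- Y * Y
  have hPP : ∀ a b, (LinearMap.mulLeft ℝ (u a) + LinearMap.mulRight ℝ (u a))
      * (LinearMap.mulLeft ℝ (u b) + LinearMap.mulRight ℝ (u b))
      - (LinearMap.mulLeft ℝ (u b) + LinearMap.mulRight ℝ (u b))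
      * (LinearMap.mulLeft ℝ (u a) + LinearMap.mulRight ℝ (u a))
      = ∑ c, f a b c • (LinearMap.mulLeft ℝ (u c) - LinearMap.mulRight ℝ (u c)) := by
    intro a b
    have h1 : ∀ x y : A, LinearMap.mulLeft ℝ x * LinearMap.mulLeft ℝ y
        = LinearMap.mulLeft ℝ (x * y) := fun x y => by
      rw [LinearMap.mulLeft_mul, Module.End.mul_eq_comp]
    have h2 : ∀ x y : A, LinearMap.mulRight ℝ x * LinearMap.mulRight ℝ y
        = LinearMap.mulRight ℝ (y * x) := fun x y => by
      rw [LinearMap.mulRight_mul, Module.End.mul_eq_comp]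
    have h3 : ∀ x y : A, LinearMap.mulLeft ℝ x * LinearMap.mulRight ℝ y
        = LinearMap.mulRight ℝ y * LinearMap.mulLeft ℝ x := fun x y =>
      (LinearMap.commute_mulLeft_right x y).eq
    calc (LinearMap.mulLeft ℝ (u a) + LinearMap.mulRight ℝ (u a))
          * (LinearMap.mulLeft ℝ (u b) + LinearMap.mulRight ℝ (u b))
        - (LinearMap.mulLeft ℝ (u b) + LinearMap.mulRight ℝ (u b))
          * (LinearMap.mulLeft ℝ (u a) + LinearMap.mulRight ℝ (u a))
        = (LinearMap.mulLeft ℝ (u a) * LinearMap.mulLeft ℝ (u b)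
            - LinearMap.mulLeft ℝ (u b) * LinearMap.mulLeft ℝ (u a))
          + (LinearMap.mulRight ℝ (u a) * LinearMap.mulRight ℝ (u b)
            - LinearMap.mulRight ℝ (u b) * LinearMap.mulRight ℝ (u a))
          + ((LinearMap.mulLeft ℝ (u a) * LinearMap.mulRight ℝ (u b)
            - LinearMap.mulRight ℝ (u b) * LinearMap.mulLeft ℝ (u a))
          + (LinearMap.mulRight ℝ (u a) * LinearMap.mulLeft ℝ (u b)
            - LinearMap.mulLeft ℝ (u b) * LinearMap.mulRight ℝ (u a))) := by
          noncomm_ring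
      _ = (LinearMap.mulLeft ℝ (u a * u b) - LinearMap.mulLeft ℝ (u b * u a))
          + (LinearMap.mulRight ℝ (u b * u a) - LinearMap.mulRight ℝ (u a * u b)) := by
          rw [h1, h1, h2, h2, h3 (u a) (u b), h3 (u b) (u a)]
          simp
      _ = LinearMap.mulLeft ℝ (u a * u b - u b * u a)
          - LinearMap.mulRight ℝ (u a * u b - u b * u a) := by
          rw [aux_mulLeft_sub, aux_mulRight_sub]; abel
      _ = ∑ c, f a b c • (LinearMap.mulLeft ℝ (u c) - LinearMap.mulRight ℝ (u c)) := by
          rw [hcom a b, aux_mulLeft_sum, aux_mulRight_sum, ← Finset.sum_sub_distrib]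
          exact Finset.sum_congr rfl fun c _ => by
            rw [aux_mulLeft_smul, aux_mulRight_smul, ← smul_sub]
  have hyy1 : Y * Y = ∑ a, ∑ b, TensorProduct.map
      ((LinearMap.mulLeft ℝ (u a) + LinearMap.mulRight ℝ (u a))
        * (LinearMap.mulLeft ℝ (u b) + LinearMap.mulRight ℝ (u b))) (ιV a * ιV b) := by
    rw [hY_def, Finset.sum_mul_sum]
    simp only [hmapmul]
  have hYY : Y * Y = (1/2:ℝ) • ∑ a, ∑ b, ∑ c, f a b c • TensorProduct.map
      (LinearMap.mulLeft ℝ (u c) - LinearMap.mulRight ℝ (u c)) (ιV a * ιV b) := by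
    have hyy2 : Y * Y = -∑ a, ∑ b, TensorProduct.map
        ((LinearMap.mulLeft ℝ (u b) + LinearMap.mulRight ℝ (u b))
          * (LinearMap.mulLeft ℝ (u a) + LinearMap.mulRight ℝ (u a))) (ιV a * ιV b) := by
      rw [hyy1, Finset.sum_comm]
      simp only [← Finset.sum_neg_distrib]
      refine Finset.sum_congr rfl fun a _ => Finset.sum_congr rfl fun b _ => ?_
      rw [h_ιι b a]
      apply TensorProduct.ext'; intro x y
      simp [TensorProduct.tmul_neg, TensorProduct.neg_tmul]
    have htwice : Y * Y + Y * Y = ∑ a, ∑ b, ∑ c, f a b c • TensorProduct.map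
        (LinearMap.mulLeft ℝ (u c) - LinearMap.mulRight ℝ (u c)) (ιV a * ιV b) := by
      nth_rewrite 1 [hyy1]
      nth_rewrite 1 [hyy2]
      rw [← sub_eq_add_neg, ← Finset.sum_sub_distrib]
      refine Finset.sum_congr rfl fun a _ => ?_
      rw [← Finset.sum_sub_distrib]
      refine Finset.sum_congr rfl fun b _ => ?_
      rw [← hmap_sub_left, hPP a b, hmap_sum_left]
      exact Finset.sum_congr rfl fun c _ => (TensorProduct.map_smul_left _ _ _)
    have : (2:ℝ) • (Y * Y) = ∑ a, ∑ b, ∑ c, f a b c • TensorProduct.map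
        (LinearMap.mulLeft ℝ (u c) - LinearMap.mulRight ℝ (u c)) (ιV a * ιV b) := by
      rw [two_smul]; exact htwice
    rw [← this, smul_smul]; norm_num
  -- Y * Z + Z * Y = 0
  have hzd : ∀ d, ιV d * z + z * ιV d = 0 := by
    intro d
    rw [hz_def]
    simp only [Finset.mul_sum, Finset.sum_mul, mul_smul_comm, smul_mul_assoc,
      ← Finset.sum_add_distrib, ← smul_add]
    refine Finset.sum_eq_zero fun a _ => Finset.sum_eq_zero fun b _ =>
      Finset.sum_eq_zero fun c _ => ?_
    rw [aux_move3 ιV h_ιι d a b c]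
    simp
  have hYZ : Y * Z + Z * Y = 0 := by
    rw [hY_def, hzZ, Finset.sum_mul, Finset.mul_sum, ← Finset.sum_add_distrib]
    refine Finset.sum_eq_zero fun d _ => ?_
    rw [hmapmul, hmapmul, one_mul, mul_one, ← hmap_add_right, hzd d]
    apply TensorProduct.ext'; intro x y; simp
  -- Z * Z = 0
  have hzz : z * z = 0 := by
    apply aux_self_neg
    have hAz : ∀ a b c, (ιV a * ιV b * ιV c) * z = -(z * (ιV a * ιV b * ιV c)) := by
      intro a b c
      rw [hz_def]
      simp only [Finset.mul_sum, Finset.sum_mul, mul_smul_comm, smul_mul_assoc,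
        ← Finset.sum_neg_distrib]
      refine Finset.sum_congr rfl fun p _ => Finset.sum_congr rfl fun q _ =>
        Finset.sum_congr rfl fun r _ => ?_
      rw [aux_swap33 ιV h_ιι a b c p q r, smul_neg]
    calc z * z = ∑ a, ∑ b, ∑ c, f a b c • ((ιV a * ιV b * ιV c) * z) := by
          nth_rewrite 1 [hz_def]
          simp only [Finset.sum_mul, smul_mul_assoc]
      _ = -∑ a, ∑ b, ∑ c, f a b c • (z * (ιV a * ιV b * ιV c)) := by
          simp only [← Finset.sum_neg_distrib]
          exact Finset.sum_congr rfl fun a _ => Finset.sum_congr rfl fun b _ =>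
            Finset.sum_congr rfl fun c _ => by rw [hAz a b c, smul_neg]
      _ = -(z * z) := by
          nth_rewrite 3 [hz_def]
          simp only [Finset.mul_sum, mul_smul_comm]
  have hZZ : Z * Z = 0 := by
    rw [hzZ, hmapmul, one_mul, hzz]
    apply TensorProduct.ext'; intro x y; simp
  -- expansion of dG * dG
  have hexp : dG * dG = X * X + (-(1/2:ℝ)) • (X * Y + Y * X)
      + (1/24:ℝ) • (X * Z + Z * X) + ((1/2:ℝ) * (1/2:ℝ)) • (Y * Y)
      + (-((1/2:ℝ) * (1/24:ℝ))) • (Y * Z + Z * Y)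
      + ((1/24:ℝ) * (1/24:ℝ)) • (Z * Z) := by
    rw [hdG]
    simp only [mul_add, add_mul, mul_sub, sub_mul, smul_mul_assoc, mul_smul_comm,
      smul_smul, smul_add, smul_sub]
    module
  -- rewrite the surviving pieces in terms of Ltot
  have hB1 : ∑ a, TensorProduct.map
      (LinearMap.mulLeft ℝ (u a) + LinearMap.mulRight ℝ (u a)) (LV a)
      = ∑ a, TensorProduct.map
          (LinearMap.mulLeft ℝ (u a) + LinearMap.mulRight ℝ (u a)) (1 : Module.End ℝ V)
        * Ltot a := by
    have hcasop : ∑ a, (LinearMap.mulLeft ℝ (u a) + LinearMap.mulRight ℝ (u a))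
        * (LinearMap.mulLeft ℝ (u a) - LinearMap.mulRight ℝ (u a)) = 0 := by
      have per : ∀ a, (LinearMap.mulLeft ℝ (u a) + LinearMap.mulRight ℝ (u a))
          * (LinearMap.mulLeft ℝ (u a) - LinearMap.mulRight ℝ (u a))
          = LinearMap.mulLeft ℝ (u a * u a) - LinearMap.mulRight ℝ (u a * u a) := by
        intro a
        have h1 : LinearMap.mulLeft ℝ (u a) * LinearMap.mulLeft ℝ (u a)
            = LinearMap.mulLeft ℝ (u a * u a) := by
          rw [LinearMap.mulLeft_mul, Module.End.mul_eq_comp]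
        have h2 : LinearMap.mulRight ℝ (u a) * LinearMap.mulRight ℝ (u a)
            = LinearMap.mulRight ℝ (u a * u a) := by
          rw [LinearMap.mulRight_mul, Module.End.mul_eq_comp]
        have h3 := (LinearMap.commute_mulLeft_right (R := ℝ) (u a) (u a)).eq
        calc (LinearMap.mulLeft ℝ (u a) + LinearMap.mulRight ℝ (u a))
            * (LinearMap.mulLeft ℝ (u a) - LinearMap.mulRight ℝ (u a))
            = LinearMap.mulLeft ℝ (u a) * LinearMap.mulLeft ℝ (u a)
              - LinearMap.mulRight ℝ (u a) * LinearMap.mulRight ℝ (u a)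
              + (LinearMap.mulRight ℝ (u a) * LinearMap.mulLeft ℝ (u a)
                - LinearMap.mulLeft ℝ (u a) * LinearMap.mulRight ℝ (u a)) := by
              noncomm_ring
          _ = LinearMap.mulLeft ℝ (u a * u a) - LinearMap.mulRight ℝ (u a * u a) := by
              rw [h1, h2, h3]; simp
      rw [Finset.sum_congr rfl fun a _ => per a, Finset.sum_sub_distrib,
        ← aux_mulLeft_sum, ← aux_mulRight_sum]
      rw [show LinearMap.mulLeft ℝ (∑ a, u a * u a)
          = LinearMap.mulRight ℝ (∑ a, u a * u a) by ext x; simpa using hCas x]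
      exact sub_self _
    have per2 : ∀ a, TensorProduct.map
        (LinearMap.mulLeft ℝ (u a) + LinearMap.mulRight ℝ (u a)) (LV a)
        = TensorProduct.map
            (LinearMap.mulLeft ℝ (u a) + LinearMap.mulRight ℝ (u a)) (1 : Module.End ℝ V)
          * Ltot a
          - TensorProduct.map
              ((LinearMap.mulLeft ℝ (u a) + LinearMap.mulRight ℝ (u a))
                * (LinearMap.mulLeft ℝ (u a) - LinearMap.mulRight ℝ (u a)))
              (1 : Module.End ℝ V) := by
      intro a
      rw [hLtot a, mul_add, hmapmul, hmapmul]
      simp only [one_mul, mul_one]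
      abel
    rw [Finset.sum_congr rfl fun a _ => per2 a, Finset.sum_sub_distrib,
      ← hmap_sum_left, hcasop, hmap_zero_left, sub_zero]
  have hpair : ∀ a b c, TensorProduct.map
        (LinearMap.mulLeft ℝ (u c) - LinearMap.mulRight ℝ (u c)) (ιV a * ιV b)
      + TensorProduct.map (1 : Module.End ℝ A) (ιV a * ιV b * LV c)
      = TensorProduct.map (1 : Module.End ℝ A) (ιV a * ιV b) * Ltot c := by
    intro a b c
    rw [hLtot c, mul_add, hmapmul, hmapmul]
    simp only [one_mul, mul_one]
  -- put everything together
  have hfinal : dG * dG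
      = (-(1/2:ℝ)) • (∑ a, TensorProduct.map
          (LinearMap.mulLeft ℝ (u a) + LinearMap.mulRight ℝ (u a)) (1 : Module.End ℝ V)
          * Ltot a)
      + (1/8:ℝ) • (∑ a, ∑ b, ∑ c, f a b c •
          (TensorProduct.map (1 : Module.End ℝ A) (ιV a * ιV b) * Ltot c)) := by
    rw [hexp, hXX, hXY, hXZ, hYY, hYZ, hZZ, hB1]
    have hcomb : ∑ a, ∑ b, ∑ c, f a b c •
          (TensorProduct.map (1 : Module.End ℝ A) (ιV a * ιV b) * Ltot c)
        = (∑ a, ∑ b, ∑ c, f a b c • TensorProduct.map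
            (LinearMap.mulLeft ℝ (u c) - LinearMap.mulRight ℝ (u c)) (ιV a * ιV b))
          + ∑ a, ∑ b, ∑ c, f a b c • TensorProduct.map (1 : Module.End ℝ A)
              (ιV a * ιV b * LV c) := by
      rw [← Finset.sum_add_distrib]
      refine Finset.sum_congr rfl fun a _ => ?_
      rw [← Finset.sum_add_distrib]
      refine Finset.sum_congr rfl fun b _ => ?_
      rw [← Finset.sum_add_distrib]
      refine Finset.sum_congr rfl fun c _ => ?_
      rw [← smul_add, hpair a b c]
    rw [hcomb]
    match_scalars <;> norm_num
  rw [← Module.End.mul_apply, hfinal]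
  simp only [LinearMap.add_apply, LinearMap.smul_apply, LinearMap.sum_apply,
    Module.End.mul_apply, hω, map_zero, smul_zero, Finset.sum_const_zero, add_zero,
    zero_add]

/-- For a `G`-differential space `V` (operators `ι_a, L_a, d` with the usual
relations), the non-commutative Cartan differential
`d_G(u ⊗ b) = u ⊗ d(b) − ½ ∑_a (u_a u + u u_a) ⊗ ι_a(b) + (1/24) ∑ f_{abc} u ⊗ ι_aι_bι_c(b)`
on `U(𝔤) ⊗ V` squares to zero on invariant elements. -/
theorem cartan_differential_squares_to_zero_on_invariants
    {n : ℕ} {g : Type*} [LieRing g] [LieAlgebra ℝ g]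
    -- the ad-invariant inner product, as a symmetric bilinear form
    (ip : LinearMap.BilinForm ℝ g)
    (ip_symm : ∀ v w : g, ip v w = ip w v)
    (ip_inv : ∀ v w z : g, ip ⁅v, w⁆ z + ip w ⁅v, z⁆ = 0)
    -- an orthonormal basis
    (e : Module.Basis (Fin n) ℝ g)
    (he : ∀ a b, ip (e a) (e b) = if a = b then (1 : ℝ) else 0)
    -- structure constants
    (f : Fin n → Fin n → Fin n → ℝ)
    (hf : ∀ a b c, f a b c = ip ⁅e a, e b⁆ (e c))
    -- the generators of the universal enveloping algebra
    (u : Fin n → UniversalEnvelopingAlgebra ℝ g)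
    (hu : ∀ a, u a = UniversalEnvelopingAlgebra.ι ℝ (e a))
    -- a G-differential space V
    {V : Type*} [AddCommGroup V] [Module ℝ V]
    (ιV LV : Fin n → Module.End ℝ V) (dV : Module.End ℝ V)
    (h_dd : dV * dV = 0)
    (h_ιι : ∀ a b, ιV a * ιV b + ιV b * ιV a = 0)
    (h_Cartan : ∀ a, dV * ιV a + ιV a * dV = LV a)
    (h_Ld : ∀ a, LV a * dV = dV * LV a)
    (h_Lι : ∀ a b, LV a * ιV b - ιV b * LV a = ∑ c, f a b c • ιV c)
    (h_LL : ∀ a b, LV a * LV b - LV b * LV a = ∑ c, f a b c • LV c)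
    -- the non-commutative Cartan differential d_G on U(𝔤) ⊗ V
    (dG : Module.End ℝ (UniversalEnvelopingAlgebra ℝ g ⊗[ℝ] V))
    (hdG : dG = TensorProduct.map LinearMap.id dV
      - (1 / 2 : ℝ) • ∑ a, TensorProduct.map
          (LinearMap.mulLeft ℝ (u a) + LinearMap.mulRight ℝ (u a)) (ιV a)
      + (1 / 24 : ℝ) • ∑ a, ∑ b, ∑ c, f a b c •
          TensorProduct.map LinearMap.id (ιV a * ιV b * ιV c))
    -- the total Lie derivatives on U(𝔤) ⊗ V
    (Ltot : Fin n → Module.End ℝ (UniversalEnvelopingAlgebra ℝ g ⊗[ℝ] V))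
    (hLtot : ∀ a, Ltot a = TensorProduct.map
        (LinearMap.mulLeft ℝ (u a) - LinearMap.mulRight ℝ (u a)) LinearMap.id
      + TensorProduct.map LinearMap.id (LV a)) :
    ∀ ω : UniversalEnvelopingAlgebra ℝ g ⊗[ℝ] V,
      (∀ a, Ltot a ω = 0) → dG (dG ω) = 0 := by
  -- symmetries of the structure constants
  have hf_ba : ∀ a b c, f b a c = - f a b c := by
    intro a b c
    have hsk : ⁅e b, e a⁆ = -⁅e a, e b⁆ := by rw [← lie_skew]
    rw [hf, hf, hsk, map_neg, LinearMap.neg_apply]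
  have hf_acb : ∀ a b c, f a c b = - f a b c := by
    intro a b c
    have h := ip_inv (e a) (e b) (e c)
    rw [hf, hf, ip_symm ⁅e a, e c⁆ (e b)]
    linarith
  have hcyc : ∀ a b c, f c a b = f a b c := fun a b c => by
    rw [hf_ba a c b, hf_acb a b c, neg_neg]
  -- expansion of brackets in the orthonormal basis
  have hrepr : ∀ (v : g) (c : Fin n), ip v (e c) = e.repr v c := by
    intro v c
    conv_lhs => rw [← e.sum_repr v]
    simp [-Module.Basis.sum_repr, map_sum, LinearMap.sum_apply, map_smul, LinearMap.smul_apply, he]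
  have hbr : ∀ a b, ⁅e a, e b⁆ = ∑ c, f a b c • e c := by
    intro a b
    conv_lhs => rw [← e.sum_repr ⁅e a, e b⁆]
    refine Finset.sum_congr rfl fun c _ => ?_
    rw [hf, hrepr]
  -- commutation relations in the universal enveloping algebra
  letI := LieRing.ofAssociativeRing (A := UniversalEnvelopingAlgebra ℝ g)
  have hcom : ∀ a b, u a * u b - u b * u a = ∑ c, f a b c • u c := by
    intro a b
    calc u a * u b - u b * u a = ⁅u a, u b⁆ := (Ring.lie_def _ _).symm
      _ = UniversalEnvelopingAlgebra.ι ℝ ⁅e a, e b⁆ := by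
          rw [hu a, hu b, ← LieHom.map_lie]
      _ = ∑ c, f a b c • u c := by
          rw [hbr a b, ← LieHom.coe_toLinearMap, map_sum]
          exact Finset.sum_congr rfl fun c _ => by
            rw [map_smul, LieHom.coe_toLinearMap, hu]
  -- the Casimir element is central
  have hCb : ∀ b, Commute (u b) (∑ a, u a * u a) := by
    intro b
    have per : ∀ a, u a * u a * u b - u b * (u a * u a)
        = ∑ c, f a b c • (u a * u c + u c * u a) := by
      intro a
      calc u a * u a * u b - u b * (u a * u a)
          = u a * (u a * u b - u b * u a) + (u a * u b - u b * u a) * u a := by noncomm_ring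
        _ = u a * (∑ c, f a b c • u c) + (∑ c, f a b c • u c) * u a := by rw [hcom a b]
        _ = ∑ c, f a b c • (u a * u c + u c * u a) := by
            rw [Finset.mul_sum, Finset.sum_mul, ← Finset.sum_add_distrib]
            exact Finset.sum_congr rfl fun c _ => by
              rw [mul_smul_comm, smul_mul_assoc, ← smul_add]
    have hzero : ∑ a, (u a * u a * u b - u b * (u a * u a)) = 0 := by
      rw [Finset.sum_congr rfl fun a _ => per a]
      refine aux_sum_anti _ fun i j => ?_
      rw [(hcyc b i j).trans (hf_ba i b j), neg_smul, neg_neg, add_comm (u j * u i)]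
    rw [Finset.sum_sub_distrib, sub_eq_zero] at hzero
    show u b * (∑ a, u a * u a) = (∑ a, u a * u a) * u b
    rw [Finset.mul_sum, Finset.sum_mul]
    exact hzero.symm
  have hCv : ∀ v : g, Commute (UniversalEnvelopingAlgebra.ι ℝ v) (∑ a, u a * u a) := by
    intro v
    have hv : UniversalEnvelopingAlgebra.ι ℝ v = ∑ i, e.repr v i • u i := by
      conv_lhs => rw [← e.sum_repr v]
      rw [← LieHom.coe_toLinearMap, map_sum]
      exact Finset.sum_congr rfl fun i _ => by
        rw [map_smul, LieHom.coe_toLinearMap, hu]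
    rw [hv]
    exact Commute.sum_left _ _ _ fun i _ => (hCb i).smul_left _
  have hCas : ∀ x : UniversalEnvelopingAlgebra ℝ g,
      (∑ a, u a * u a) * x = x * (∑ a, u a * u a) := by
    have hsurj : Function.Surjective (UniversalEnvelopingAlgebra.mkAlgHom ℝ g) :=
      fun x => by
        obtain ⟨t, rfl⟩ := Quot.exists_rep x
        exact ⟨t, rfl⟩
    intro x
    obtain ⟨t, rfl⟩ := hsurj x
    suffices h : Commute ((UniversalEnvelopingAlgebra.mkAlgHom ℝ g) t) (∑ a, u a * u a) from
      h.eq.symm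
    induction t using TensorAlgebra.induction with
    | algebraMap r =>
        rw [AlgHom.commutes]
        exact Algebra.commute_algebraMap_left r _
    | ι v =>
        rw [← UniversalEnvelopingAlgebra.ι_apply]
        exact hCv v
    | mul x y hx hy =>
        rw [map_mul]
        exact hx.mul_left hy
    | add x y hx hy =>
        rw [map_add]
        exact hx.add_left hy
  -- reformulated G-differential space axioms
  have h_ac : ∀ a b, ιV a * ιV b = -(ιV b * ιV a) := fun a b =>
    eq_neg_of_add_eq_zero_left (h_ιι a b)
  have h_Lι' : ∀ a b, LV a * ιV b = ιV b * LV a + ∑ c, f a b c • ιV c := by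
    intro a b
    have h := h_Lι a b
    rw [sub_eq_iff_eq_add] at h
    rw [h, add_comm]
  exact aux_main f hf_ba hf_acb u hcom hCas ιV LV dV h_dd h_ac h_Cartan h_Lι' dG hdG Ltot hLtot
end

section
/- (Non-commutative Kalkman/Mathai–Quillen conjugation identity.) Define N: Cl(𝔤) ⊗ B → Cl(𝔤) ⊗ B as the linear map with N(w ⊗ b) = Σ_a (x_a·ε(w)) ⊗ ι_a(b). Then N is nilpotent, so φ = exp(N) is a well-defined invertible linear map, and for every index a: φ ∘ I_a ∘ φ⁻¹ = J_a, where I_a is the total contraction I_a(w ⊗ b) = (x_a·w − ε(w)·x_a) ⊗ b + ε(w) ⊗ ι_a(b), and J_a(w ⊗ b) = (x_a·w − ε(w)·x_a) ⊗ b. -/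
open scoped TensorProduct

/-- Product of `n+1` anticommuting square-zero operators indexed by `Fin n` vanishes. -/
lemma aux_word {n : ℕ} {B : Type*} [AddCommGroup B] [Module ℝ B]
    (ιB : Fin n → Module.End ℝ B)
    (h_ιι : ∀ a b, ιB a * ιB b + ιB b * ιB a = 0)
    (c : Fin (n + 1) → Fin n) :
    (List.ofFn fun i => ιB (c i)).prod = 0 := by
  classical
  set bV : Module.Basis (Fin n) ℝ (Fin n → ℝ) := Pi.basisFun ℝ (Fin n) with hbV
  set f : (Fin n → ℝ) →ₗ[ℝ] Module.End ℝ B := bV.constr ℝ ιB with hf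
  have hT : ∀ v w : Fin n → ℝ, f v * f w + f w * f v = 0 := by
    let T : (Fin n → ℝ) →ₗ[ℝ] (Fin n → ℝ) →ₗ[ℝ] Module.End ℝ B :=
      (LinearMap.mul ℝ (Module.End ℝ B)).compl₁₂ f f
        + ((LinearMap.mul ℝ (Module.End ℝ B)).flip).compl₁₂ f f
    have hT0 : T = 0 := by
      apply bV.ext; intro a
      apply bV.ext; intro b
      simp only [T, LinearMap.add_apply, LinearMap.compl₁₂_apply, LinearMap.mul_apply',
        LinearMap.flip_apply, LinearMap.zero_apply, hf, Module.Basis.constr_basis]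
      exact h_ιι a b
    intro v w
    have := LinearMap.congr_fun (LinearMap.congr_fun hT0 v) w
    simpa only [T, LinearMap.add_apply, LinearMap.compl₁₂_apply, LinearMap.mul_apply',
      LinearMap.flip_apply, LinearMap.zero_apply] using this
  have hsq : ∀ v, f v * f v = 0 := by
    intro v
    have h2 : (2 : ℝ) • (f v * f v) = 0 := by
      rw [two_smul]; exact hT v v
    have := smul_eq_zero.mp h2
    simpa using this
  let F : ExteriorAlgebra ℝ (Fin n → ℝ) →ₐ[ℝ] Module.End ℝ B :=
    CliffordAlgebra.lift (0 : QuadraticForm ℝ (Fin n → ℝ))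
      ⟨f, fun v => by simp [hsq v]⟩
  set u : Fin (n + 1) → (Fin n → ℝ) := fun i => bV (c i) with hu
  obtain ⟨i, j, hij, hcij⟩ :=
    Fintype.exists_ne_map_eq_of_card_lt c (by simp)
  have hz : ExteriorAlgebra.ιMulti ℝ (n + 1) u = 0 :=
    AlternatingMap.map_eq_zero_of_eq _ u (by rw [hu]; simp [hcij]) hij
  have key : ∀ i, F (ExteriorAlgebra.ι ℝ (u i)) = ιB (c i) := by
    intro i
    show CliffordAlgebra.lift (0 : QuadraticForm ℝ (Fin n → ℝ)) _ (CliffordAlgebra.ι _ (bV (c i))) = _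
    rw [CliffordAlgebra.lift_ι_apply]
    exact bV.constr_basis ℝ ιB (c i)
  calc (List.ofFn fun i => ιB (c i)).prod
      = (List.ofFn fun i => F (ExteriorAlgebra.ι ℝ (u i))).prod := by
        simp only [key]
    _ = F ((List.ofFn fun i => ExteriorAlgebra.ι ℝ (u i)).prod) := by
        rw [map_list_prod, List.map_ofFn]; rfl
    _ = F (ExteriorAlgebra.ιMulti ℝ (n + 1) u) := by
        rw [ExteriorAlgebra.ιMulti_apply]
    _ = 0 := by rw [hz, map_zero]


/-- Noncommutative expansion of a power of a finite sum. -/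
lemma aux_pow_sum {R : Type*} [Ring R] {n : ℕ} (M : Fin n → R) :
    ∀ k : ℕ, (∑ a, M a) ^ k = ∑ c : Fin k → Fin n, (List.ofFn fun i => M (c i)).prod := by
  intro k
  induction k with
  | zero => simp
  | succ k ih =>
    calc (∑ a, M a) ^ (k + 1) = (∑ a, M a) * (∑ c : Fin k → Fin n, (List.ofFn fun i => M (c i)).prod) := by
          rw [pow_succ', ih]
      _ = ∑ a, ∑ c : Fin k → Fin n, M a * (List.ofFn fun i => M (c i)).prod := by
          rw [Finset.sum_mul_sum]
      _ = ∑ p : Fin n × (Fin k → Fin n), M p.1 * (List.ofFn fun i => M (p.2 i)).prod := by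
          rw [Fintype.sum_prod_type]
      _ = ∑ c : Fin (k + 1) → Fin n, (List.ofFn fun i => M (c i)).prod := by
          rw [← Equiv.sum_comp (Fin.consEquiv fun _ : Fin (k + 1) => Fin n)
            (fun c => (List.ofFn fun i => M (c i)).prod)]
          apply Finset.sum_congr rfl
          intro p _
          simp [Fin.consEquiv, List.ofFn_succ]

/-- A word in `TensorProduct.map`s is the `TensorProduct.map` of the words. -/
lemma aux_map_word {M₁ M₂ : Type*} [AddCommGroup M₁] [AddCommGroup M₂]
    [Module ℝ M₁] [Module ℝ M₂] {n : ℕ}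
    (Y : Fin n → Module.End ℝ M₁) (Z : Fin n → Module.End ℝ M₂) :
    ∀ (k : ℕ) (c : Fin k → Fin n),
      (List.ofFn fun i => TensorProduct.map (Y (c i)) (Z (c i))).prod
        = TensorProduct.map (List.ofFn fun i => Y (c i)).prod
            (List.ofFn fun i => Z (c i)).prod := by
  intro k
  induction k with
  | zero =>
    intro c
    simp only [List.ofFn_zero, List.prod_nil]
    show (LinearMap.id : _ →ₗ[ℝ] _) = TensorProduct.map LinearMap.id LinearMap.id
    rw [TensorProduct.map_id]
  | succ k ih =>
    intro c
    simp only [List.ofFn_succ, List.prod_cons]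
    rw [ih, Module.End.mul_eq_comp, Module.End.mul_eq_comp, Module.End.mul_eq_comp,
      ← TensorProduct.map_comp]

lemma aux_exp {R : Type*} [Ring R] [Algebra ℝ R] (N K J : R)
    (hKN : K * N = N * K) (hJN : J * N = N * J + K)
    (m : ℕ) (hm : N ^ m = 0) :
    IsUnit (∑ j ∈ Finset.range m, ((j.factorial : ℝ))⁻¹ • N ^ j) ∧
    (∑ j ∈ Finset.range m, ((j.factorial : ℝ))⁻¹ • N ^ j) * (J + K)
      = J * ∑ j ∈ Finset.range m, ((j.factorial : ℝ))⁻¹ • N ^ j := by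
  set S : ℕ → R := fun M => ∑ j ∈ Finset.range M, ((j.factorial : ℝ))⁻¹ • N ^ j with hS
  have hKNp : ∀ j : ℕ, K * N ^ j = N ^ j * K := fun j =>
    ((Commute.pow_right (hKN : Commute K N) j) : _)
  have hKS : ∀ M, K * S M = S M * K := by
    intro M
    rw [hS]
    simp only [Finset.mul_sum, Finset.sum_mul, mul_smul_comm, smul_mul_assoc]
    exact Finset.sum_congr rfl fun j _ => by rw [hKNp j]
  have hstep : ∀ j : ℕ, J * N ^ (j + 1) = N ^ (j + 1) * J + (j + 1) • (K * N ^ j) := by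
    intro j
    induction j with
    | zero => simpa using hJN
    | succ j ih =>
      calc J * N ^ (j + 2) = (J * N ^ (j + 1)) * N := by rw [pow_succ, ← mul_assoc]
        _ = (N ^ (j + 1) * J + (j + 1) • (K * N ^ j)) * N := by rw [ih]
        _ = N ^ (j + 1) * (J * N) + (j + 1) • (K * (N ^ j * N)) := by
            rw [add_mul, smul_mul_assoc, mul_assoc, mul_assoc]
        _ = N ^ (j + 1) * (N * J) + N ^ (j + 1) * K + (j + 1) • (K * N ^ (j + 1)) := by
            rw [hJN, mul_add, ← pow_succ, add_assoc]
        _ = N ^ (j + 2) * J + (j + 2) • (K * N ^ (j + 1)) := by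
            rw [← mul_assoc, ← pow_succ, ← hKNp (j + 1), succ_nsmul (K * N ^ (j + 1)) (j + 1)]
            abel
  have hcoef : ∀ j : ℕ, (((j + 1).factorial : ℝ))⁻¹ • ((j + 1) • (K * N ^ j))
      = ((j.factorial : ℝ))⁻¹ • (K * N ^ j) := by
    intro j
    rw [← Nat.cast_smul_eq_nsmul ℝ, smul_smul]
    congr 1
    rw [Nat.factorial_succ]
    push_cast
    rw [mul_comm ((j:ℝ) + 1)]
    rw [mul_inv, mul_assoc, inv_mul_cancel₀ (by positivity), mul_one]
  have key : ∀ M, J * S (M + 1) = S (M + 1) * J + K * S M := by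
    intro M
    have l1 : J * S (M + 1) = ∑ j ∈ Finset.range (M + 1),
        ((j.factorial : ℝ))⁻¹ • (J * N ^ j) := by
      simp only [hS, Finset.mul_sum]
      exact Finset.sum_congr rfl fun j _ => (mul_smul_comm _ _ _)
    have l2 : S (M + 1) * J = ∑ j ∈ Finset.range (M + 1),
        ((j.factorial : ℝ))⁻¹ • (N ^ j * J) := by
      simp only [hS, Finset.sum_mul]
      exact Finset.sum_congr rfl fun j _ => (smul_mul_assoc _ _ _)
    have l3 : K * S M = ∑ j ∈ Finset.range M, ((j.factorial : ℝ))⁻¹ • (K * N ^ j) := by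
      simp only [hS, Finset.mul_sum]
      exact Finset.sum_congr rfl fun j _ => (mul_smul_comm _ _ _)
    rw [l1, l2, l3, Finset.sum_range_succ' (fun j => ((j.factorial : ℝ))⁻¹ • (J * N ^ j)),
      Finset.sum_range_succ' (fun j => ((j.factorial : ℝ))⁻¹ • (N ^ j * J))]
    have l4 : ∀ j ∈ Finset.range M, (((j + 1).factorial : ℝ))⁻¹ • (J * N ^ (j + 1))
        = (((j + 1).factorial : ℝ))⁻¹ • (N ^ (j + 1) * J)
          + ((j.factorial : ℝ))⁻¹ • (K * N ^ j) := by
      intro j _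
      rw [hstep j, smul_add, hcoef j]
    rw [Finset.sum_congr rfl l4, Finset.sum_add_distrib]
    simp only [Nat.factorial_zero, Nat.cast_one, inv_one, one_smul, pow_zero, mul_one, one_mul]
    abel
  have hS_succ : S (m + 1) = S m := by
    simp only [hS]
    rw [Finset.sum_range_succ, hm, smul_zero, add_zero]
  have main : S m * (J + K) = J * S m := by
    have h1 : J * S m = S m * J + K * S m := by
      have := key m
      rwa [hS_succ] at this
    rw [mul_add, h1, hKS m]
  refine ⟨?_, main⟩
  -- IsUnit
  rcases m with _ | k
  · have h1 : (0 : R) = 1 := by rw [← pow_zero N, hm]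
    haveI := subsingleton_of_zero_eq_one h1
    exact isUnit_of_subsingleton _
  · set P : R := ∑ j ∈ Finset.range k, (((j + 1).factorial : ℝ))⁻¹ • N ^ j with hP
    have hSP : S (k + 1) = N * P + 1 := by
      simp only [hS]
      rw [Finset.sum_range_succ' (fun j => ((j.factorial : ℝ))⁻¹ • N ^ j)]
      simp only [Nat.factorial_zero, Nat.cast_one, inv_one, one_smul, pow_zero]
      congr 1
      rw [hP, Finset.mul_sum]
      exact Finset.sum_congr rfl fun j _ => by
        rw [mul_smul_comm, ← pow_succ']
    have hNP : Commute N P := by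
      rw [hP]
      exact Commute.sum_right _ _ _ fun j _ =>
        Commute.smul_right (Commute.pow_right (Commute.refl N) j) _
    have hnil : IsNilpotent (N * P) := by
      refine ⟨k + 1, ?_⟩
      rw [hNP.mul_pow, hm, zero_mul]
    have hu := hnil.isUnit_one_add
    show IsUnit (S (k + 1))
    rw [hSP, add_comm]
    exact hu

/-- non-commutative Kalkman/Mathai–Quillen conjugation identity.
On `Cl(𝔤) ⊗ B`, the operator `N(w ⊗ b) = ∑_a (x_a·ε(w)) ⊗ ι_a(b)` is nilpotent, the Kalkman
map `φ = exp(N)` is an invertible linear map, and `φ ∘ I_a ∘ φ⁻¹ = J_a`, where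
`I_a(w ⊗ b) = (x_a w − ε(w) x_a) ⊗ b + ε(w) ⊗ ι_a(b)` is the total contraction and
`J_a(w ⊗ b) = (x_a w − ε(w) x_a) ⊗ b`. -/
theorem kalkman_conjugation
    {n : ℕ} {g : Type*} [AddCommGroup g] [Module ℝ g]
    -- the inner product, as a symmetric bilinear form
    (ip : LinearMap.BilinForm ℝ g)
    (ip_symm : ∀ v w : g, ip v w = ip w v)
    -- an orthonormal basis
    (e : Module.Basis (Fin n) ℝ g)
    (he : ∀ a b, ip (e a) (e b) = if a = b then (1 : ℝ) else 0)
    -- the quadratic form Q(v) = ½⟨v,v⟩ and its Clifford algebra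
    (Q : QuadraticForm ℝ g)
    (hQ : ∀ v, Q v = (1 / 2 : ℝ) * ip v v)
    -- the Clifford generators
    (x : Fin n → CliffordAlgebra Q)
    (hx : ∀ a, x a = CliffordAlgebra.ι Q (e a))
    -- a vector space B with anticommuting contraction operators
    {B : Type*} [AddCommGroup B] [Module ℝ B]
    (ιB : Fin n → Module.End ℝ B)
    (h_ιι : ∀ a b, ιB a * ιB b + ιB b * ιB a = 0)
    -- the operator N(w ⊗ b) = ∑_a (x_a·ε(w)) ⊗ ι_a(b)
    (N : Module.End ℝ (CliffordAlgebra Q ⊗[ℝ] B))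
    (hN : N = ∑ a, TensorProduct.map
      ((LinearMap.mulLeft ℝ (x a)).comp CliffordAlgebra.involute.toLinearMap) (ιB a))
    -- the total contractions I_a and the contractions J_a on the first factor
    (I J : Fin n → Module.End ℝ (CliffordAlgebra Q ⊗[ℝ] B))
    (hI : ∀ a, I a = TensorProduct.map
        (LinearMap.mulLeft ℝ (x a)
          - (LinearMap.mulRight ℝ (x a)).comp CliffordAlgebra.involute.toLinearMap)
        LinearMap.id
      + TensorProduct.map CliffordAlgebra.involute.toLinearMap (ιB a))
    (hJ : ∀ a, J a = TensorProduct.map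
        (LinearMap.mulLeft ℝ (x a)
          - (LinearMap.mulRight ℝ (x a)).comp CliffordAlgebra.involute.toLinearMap)
        LinearMap.id) :
    IsNilpotent N ∧
    ∀ m : ℕ, N ^ m = 0 →
      IsUnit (∑ j ∈ Finset.range m, ((j.factorial : ℝ))⁻¹ • N ^ j) ∧
      ∀ a, (∑ j ∈ Finset.range m, ((j.factorial : ℝ))⁻¹ • N ^ j) * I a
        = J a * ∑ j ∈ Finset.range m, ((j.factorial : ℝ))⁻¹ • N ^ j := by
  
  classical
  -- the twisted contraction on the second factor
  set K : Fin n → Module.End ℝ (CliffordAlgebra Q ⊗[ℝ] B) :=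
    fun a => TensorProduct.map CliffordAlgebra.involute.toLinearMap (ιB a) with hK
  -- Clifford relations
  have hxx : ∀ a c, x a * x c + x c * x a
      = algebraMap ℝ (CliffordAlgebra Q) (if a = c then (1 : ℝ) else 0) := by
    intro a c
    rw [hx, hx, CliffordAlgebra.ι_mul_ι_add_swap]
    congr 1
    have : QuadraticMap.polar Q (e a) (e c) = ip (e a) (e c) := by
      simp only [QuadraticMap.polar, hQ, map_add, LinearMap.add_apply]
      rw [ip_symm (e c) (e a)]
      ring
    rw [this, he]
  have hEx : ∀ c (v : CliffordAlgebra Q),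
      CliffordAlgebra.involute (x c * v) = -(x c * CliffordAlgebra.involute v) := by
    intro c v
    rw [hx, map_mul, CliffordAlgebra.involute_ι, neg_mul]
  have hxE : ∀ c (v : CliffordAlgebra Q),
      CliffordAlgebra.involute (v * x c) = -(CliffordAlgebra.involute v * x c) := by
    intro c v
    rw [hx, map_mul, CliffordAlgebra.involute_ι, mul_neg]
  have hanti : ∀ a c (b : B), ιB a (ιB c b) = -(ιB c (ιB a b)) := by
    intro a c b
    have := congrArg (fun φ : Module.End ℝ B => φ b) (h_ιι a c)
    simp only [LinearMap.add_apply, Module.End.mul_apply, LinearMap.zero_apply] at this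
    exact eq_neg_of_add_eq_zero_left this
  -- the key Clifford identity
  have clkey : ∀ (a c : Fin n) (u v : CliffordAlgebra Q),
      x a * (x c * u) + (x c * v) * x a
        = x c * (-(x a * u) + v * x a) + (if c = a then u else 0) := by
    intro a c u v
    by_cases hca : c = a
    · subst hca
      have h1 : x c * x c + x c * x c = 1 := by
        have := hxx c c
        rwa [if_pos rfl, map_one] at this
      have h2 : x c * (x c * u) + x c * (x c * u) = u := by
        have := congrArg (· * u) h1
        simpa only [add_mul, mul_assoc, one_mul] using this
      calc x c * (x c * u) + x c * v * x c
          = x c * (-(x c * u) + v * x c)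
              + (x c * (x c * u) + x c * (x c * u)) := by noncomm_ring
        _ = x c * (-(x c * u) + v * x c) + (if c = c then u else 0) := by
            rw [h2, if_pos rfl]
    · have h1 : x a * x c + x c * x a = 0 := by
        rw [hxx a c, if_neg (fun h => hca h.symm), map_zero]
      have h2 : x a * (x c * u) + x c * (x a * u) = 0 := by
        have := congrArg (· * u) h1
        simpa only [add_mul, mul_assoc, zero_mul] using this
      calc x a * (x c * u) + x c * v * x a
          = -(x c * (x a * u)) + x c * (v * x a)
              + (x a * (x c * u) + x c * (x a * u)) := by noncomm_ring
        _ = -(x c * (x a * u)) + x c * (v * x a) + 0 := by rw [h2]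
        _ = x c * (-(x a * u) + v * x a) + (if c = a then u else 0) := by
            rw [if_neg hca]; noncomm_ring
  have hKN : ∀ a, K a * N = N * K a := by
    intro a
    rw [hN, Finset.mul_sum, Finset.sum_mul]
    refine Finset.sum_congr rfl fun c _ => ?_
    apply TensorProduct.ext'
    intro w b
    simp only [Module.End.mul_apply, TensorProduct.map_tmul, LinearMap.coe_comp,
      Function.comp_apply, AlgHom.toLinearMap_apply, LinearMap.mulLeft_apply, hK]
    rw [hEx, CliffordAlgebra.involute_involute, hanti a c b,
      TensorProduct.neg_tmul, TensorProduct.tmul_neg, neg_neg]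
  -- the main commutation identity  J a * N = N * J a + K a
  have hJN : ∀ a, J a * N = N * J a + K a := by
    intro a
    apply TensorProduct.ext'
    intro w b
    rw [hJ, hN]
    simp only [Module.End.mul_apply, LinearMap.add_apply, LinearMap.sum_apply, map_sum,
      TensorProduct.map_tmul, LinearMap.coe_comp, Function.comp_apply,
      AlgHom.toLinearMap_apply, LinearMap.mulLeft_apply, LinearMap.mulRight_apply,
      LinearMap.sub_apply, LinearMap.id_apply, hK]
    have hterm : ∀ c : Fin n,
        (x a * (x c * CliffordAlgebra.involute w)
          - CliffordAlgebra.involute (x c * CliffordAlgebra.involute w) * x a)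
            ⊗ₜ[ℝ] (ιB c) b
        = (x c * CliffordAlgebra.involute (x a * w - CliffordAlgebra.involute w * x a))
            ⊗ₜ[ℝ] (ιB c) b
          + (if c = a then CliffordAlgebra.involute w ⊗ₜ[ℝ] (ιB c) b else 0) := by
      intro c
      have hfirst : x a * (x c * CliffordAlgebra.involute w)
          - CliffordAlgebra.involute (x c * CliffordAlgebra.involute w) * x a
          = x c * CliffordAlgebra.involute (x a * w - CliffordAlgebra.involute w * x a)
            + (if c = a then CliffordAlgebra.involute w else 0) := by
        rw [hEx c, CliffordAlgebra.involute_involute, map_sub, hEx a, hxE a,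
          CliffordAlgebra.involute_involute, neg_mul, sub_neg_eq_add, sub_neg_eq_add]
        exact clkey a c (CliffordAlgebra.involute w) w
      rw [hfirst, TensorProduct.add_tmul, TensorProduct.ite_tmul]
    rw [Finset.sum_congr rfl (fun c _ => hterm c), Finset.sum_add_distrib,
      Finset.sum_ite_eq' Finset.univ a
        (fun c => CliffordAlgebra.involute w ⊗ₜ[ℝ] (ιB c) b)]
    simp
  have hnil : N ^ (n + 1) = 0 := by
    rw [hN, aux_pow_sum (fun a => TensorProduct.map
      ((LinearMap.mulLeft ℝ (x a)).comp CliffordAlgebra.involute.toLinearMap) (ιB a))]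
    refine Finset.sum_eq_zero fun c _ => ?_
    beta_reduce
    rw [aux_map_word
        (fun a => (LinearMap.mulLeft ℝ (x a)).comp CliffordAlgebra.involute.toLinearMap)
        ιB (n + 1) c,
      aux_word ιB h_ιι c, TensorProduct.map_zero_right]
  refine ⟨⟨n + 1, hnil⟩, ?_⟩
  intro m hm
  constructor
  · exact (aux_exp N 0 0 (by simp) (by simp) m hm).1
  · intro a
    have hIa : I a = J a + K a := by simp only [hI, hJ, hK]
    rw [hIa]
    exact (aux_exp N (K a) (J a) (hKN a) (hJN a) m hm).2
end
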